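/- arXiv:2004.01737 — 7 statements merged into one kernel-verified Lean document; each statement's English description precedes it below -/
import Mathlib

section
/- Let N, M ≥ 1 be integers and 0 ≤ m ≤ M−1. Let Q ∈ ℂ^{NM×NM} be the NM-point DFT matrix, Q_m ∈ ℂ^{NM×N} its columns with indices {m+nM : 0 ≤ n ≤ N−1}, and Q̄_m ∈ ℂ^{NM×(M−1)N} the matrix of the remaining columns of Q. Let q_m ∈ ℂ^M have entries (q_m)_j = exp(−2πi·jm/M). Then (i) Q̄_m Q̄_m^H = MN·I_{NM} − N·(q_m q_m^H ⊗ I_N), and (ii) (q_m q_m^H ⊗ I_N)·Q̄_m = 0. -/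
open Matrix Kronecker Finset

noncomputable def ee (c : ℕ) (a : ℤ) : ℂ :=
  Complex.exp (2 * Real.pi * Complex.I / (c : ℂ)) ^ a

lemma ee_eq_exp (c : ℕ) (a : ℤ) :
    ee c a = Complex.exp ((a : ℂ) * (2 * Real.pi * Complex.I / (c : ℂ))) := by
  rw [ee, Complex.exp_int_mul]

lemma ee_add (c : ℕ) (a b : ℤ) : ee c (a + b) = ee c a * ee c b :=
  zpow_add₀ (Complex.exp_ne_zero _) a b

lemma ee_zero (c : ℕ) : ee c 0 = 1 := rfl

lemma ee_eq_one_iff (c : ℕ) (hc : c ≠ 0) (a : ℤ) : ee c a = 1 ↔ (c : ℤ) ∣ a :=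
  (Complex.isPrimitiveRoot_exp c hc).zpow_eq_one_iff_dvd a

lemma star_ee (c : ℕ) (a : ℤ) : star (ee c a) = ee c (-a) := by
  have h : star (Complex.exp (2 * Real.pi * Complex.I / (c : ℂ))) =
      (Complex.exp (2 * Real.pi * Complex.I / (c : ℂ)))⁻¹ := by
    rw [show (star (Complex.exp (2 * Real.pi * Complex.I / (c : ℂ))) : ℂ) =
        Complex.exp (star (2 * Real.pi * Complex.I / (c : ℂ))) from (Complex.exp_conj _).symm,
      ← Complex.exp_neg]
    congr 1
    simp [Complex.ext_iff, neg_div]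
  rw [ee, ee]
  rw [show (star (Complex.exp (2 * Real.pi * Complex.I / (c : ℂ)) ^ a) : ℂ) =
      star (Complex.exp (2 * Real.pi * Complex.I / (c : ℂ))) ^ a from map_zpow₀ (starRingEnd ℂ) _ a,
    h, _root_.inv_zpow, ← _root_.zpow_neg]

lemma ee_nat_pow (c : ℕ) (s : ℤ) (i : ℕ) : ee c s ^ i = ee c (s * i) := by
  rw [ee, ee, ← zpow_natCast, ← _root_.zpow_mul]

lemma sum_pow_fin (K : ℕ) (x : ℂ) (hx : x ^ K = 1) :
    ∑ i : Fin K, x ^ (i : ℕ) = if x = 1 then (K : ℂ) else 0 := by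
  rw [Fin.sum_univ_eq_sum_range]
  split_ifs with h
  · simp [h]
  · rw [geom_sum_eq h, hx]; simp

lemma sum_ee (c : ℕ) (hc : c ≠ 0) (K : ℕ) (s : ℤ) (hs : (c : ℤ) ∣ s * K) :
    ∑ i : Fin K, ee c (s * i) = if ee c s = 1 then (K : ℂ) else 0 := by
  have hx : ee c s ^ K = 1 := by
    rw [ee_nat_pow, ee_eq_one_iff c hc]; exact hs
  rw [← sum_pow_fin K _ hx]
  exact Finset.sum_congr rfl fun i _ => (ee_nat_pow c s i).symm

lemma dvd_small (c d : ℤ) (hc : 0 < c) (h1 : -c < d) (h2 : d < c) (hd : c ∣ d) : d = 0 := by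
  rcases hd with ⟨t, rfl⟩
  have ht1 : t < 1 := by
    have : c * t < c * 1 := by linarith
    exact lt_of_mul_lt_mul_left this hc.le
  have ht2 : -1 < t := by
    have : c * (-1) < c * t := by linarith
    exact lt_of_mul_lt_mul_left this hc.le
  have : t = 0 := by omega
  simp [this]

lemma keyN {N M : ℕ} (hN : 0 < N) (j j' : Fin M) (b b' : Fin N) :
    ((N : ℤ) ∣ (((j' : ℕ) : ℤ) * N + ((b' : ℕ) : ℤ)) - (((j : ℕ) : ℤ) * N + ((b : ℕ) : ℤ)))
      ↔ b = b' := by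
  have hrw : (((j' : ℕ) : ℤ) * N + ((b' : ℕ) : ℤ)) - (((j : ℕ) : ℤ) * N + ((b : ℕ) : ℤ))
      = ((((j' : ℕ) : ℤ) - j) * N) + (((b' : ℕ) : ℤ) - b) := by ring
  rw [hrw]
  have hd : (N : ℤ) ∣ (((j' : ℕ) : ℤ) - j) * N := dvd_mul_left _ _
  rw [dvd_add_right hd]
  constructor
  · intro h
    have hb := b.2; have hb' := b'.2
    have h0 : ((b' : ℕ) : ℤ) - b = 0 := by
      apply dvd_small (N : ℤ) _ (by exact_mod_cast hN) _ _ h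
      · have : ((b' : ℕ) : ℤ) ≥ 0 := by positivity
        have : ((b : ℕ) : ℤ) < N := by exact_mod_cast hb
        omega
      · have : ((b' : ℕ) : ℤ) < N := by exact_mod_cast hb'
        have : ((b : ℕ) : ℤ) ≥ 0 := by positivity
        omega
    have : (b' : ℕ) = (b : ℕ) := by omega
    exact (Fin.ext this).symm
  · rintro rfl; simp

lemma abound {N M : ℕ} (hN : 0 < N) (j : Fin M) (b : Fin N) :
    (((j : ℕ) : ℤ) * N + ((b : ℕ) : ℤ)) < (N : ℤ) * M := by
  have h1 : ((j : ℕ) : ℤ) ≤ (M : ℤ) - 1 := by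
    have := j.2; omega
  have h2 : ((b : ℕ) : ℤ) ≤ (N : ℤ) - 1 := by
    have := b.2; omega
  have hN' : (0 : ℤ) ≤ N := by positivity
  nlinarith [mul_le_mul_of_nonneg_right h1 hN']

lemma keyNM {N M : ℕ} (hN : 0 < N) (hM : 0 < M) (j j' : Fin M) (b b' : Fin N) :
    ((((j' : ℕ) : ℤ) * N + ((b' : ℕ) : ℤ)) - (((j : ℕ) : ℤ) * N + ((b : ℕ) : ℤ)) = 0)
      ↔ (j = j' ∧ b = b') := by
  constructor
  · intro h
    have hb : b = b' := by
      rw [← keyN hN j j' b b', h]; exact dvd_zero _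
    refine ⟨?_, hb⟩
    subst hb
    have hj : (((j' : ℕ) : ℤ)) * N = ((j : ℕ) : ℤ) * N := by omega
    have hN' : (N : ℤ) ≠ 0 := by exact_mod_cast hN.ne'
    have : ((j' : ℕ) : ℤ) = ((j : ℕ) : ℤ) := mul_right_cancel₀ hN' hj
    exact (Fin.ext (by exact_mod_cast this)).symm
  · rintro ⟨rfl, rfl⟩; ring

lemma gbound {N M : ℕ} (m : ℕ) (hm : m < M) (n : Fin N) : m + (n : ℕ) * M < N * M := by
  have hn : (n : ℕ) ≤ N - 1 := by have := n.2; omega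
  have h1 : (n : ℕ) * M ≤ (N - 1) * M := Nat.mul_le_mul_right _ hn
  have h2 : M + (N - 1) * M = (1 + (N - 1)) * M := by ring
  have h3 : 1 + (N - 1) = N := by have := n.2; omega
  calc m + (n : ℕ) * M < M + (n : ℕ) * M := by omega
    _ ≤ M + (N - 1) * M := by omega
    _ = N * M := by rw [h2, h3]

lemma sum_split {N M : ℕ} (m : ℕ) (hM : 0 < M) (hm : m < M) (f : Fin (N * M) → ℂ) :
    ∑ k : {k : Fin (N * M) // ∀ n : Fin N, (k : ℕ) ≠ m + (n : ℕ) * M}, f k.1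
      = ∑ k : Fin (N * M), f k - ∑ n : Fin N, f ⟨m + (n : ℕ) * M, gbound m hm n⟩ := by
  classical
  set P : Fin (N * M) → Prop := fun k => ∀ n : Fin N, (k : ℕ) ≠ m + (n : ℕ) * M with hP
  set g : Fin N → Fin (N * M) := fun n => ⟨m + (n : ℕ) * M, gbound m hm n⟩ with hg
  have hginj : Function.Injective g := by
    intro x y hxy
    have : m + (x : ℕ) * M = m + (y : ℕ) * M := congrArg Fin.val hxy
    have : (x : ℕ) * M = (y : ℕ) * M := by omega
    exact Fin.ext (Nat.eq_of_mul_eq_mul_right hM this)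
  have h1 : ∑ k ∈ Finset.univ.filter P, f k = ∑ k : {k // P k}, f k.1 :=
    Finset.sum_subtype _ (by simp) f
  have h2 : Finset.univ.filter (fun k => ¬ P k) = Finset.univ.image g := by
    ext k
    simp only [Finset.mem_filter, Finset.mem_univ, true_and, Finset.mem_image, hP, hg]
    push_neg
    constructor
    · rintro ⟨n, hn⟩; exact ⟨n, Fin.ext hn.symm⟩
    · rintro ⟨n, rfl⟩; exact ⟨n, rfl⟩
  have h3 : ∑ k ∈ Finset.univ.image g, f k = ∑ n : Fin N, f (g n) :=
    Finset.sum_image (fun x _ y _ h => hginj h)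
  have h4 := Finset.sum_filter_add_sum_filter_not Finset.univ P f
  rw [h1, h2, h3] at h4
  linear_combination h4




/-- Let `Q̄_m` be the `NM`-point DFT matrix with the `N` columns indexed
`{m + nM : 0 ≤ n ≤ N-1}` removed (rows indexed by pairs `(j,b) ↦ jN+b`, remaining
columns by the subtype of indices not of the form `m + nM`).  Then
(i) `Q̄_m Q̄_mᴴ = MN·I − N·(q_m q_mᴴ ⊗ I_N)` and (ii) `(q_m q_mᴴ ⊗ I_N)·Q̄_m = 0`. -/
theorem stmt_1 (N M : ℕ) (hN : 1 ≤ N) (hM : 1 ≤ M) (m : ℕ) (hm : m ≤ M - 1)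
    (Qbar : Matrix (Fin M × Fin N)
      {k : Fin (N * M) // ∀ n : Fin N, (k : ℕ) ≠ m + (n : ℕ) * M} ℂ)
    (hQbar : ∀ (j : Fin M) (b : Fin N)
        (k : {k : Fin (N * M) // ∀ n : Fin N, (k : ℕ) ≠ m + (n : ℕ) * M}),
      Qbar (j, b) k =
        Complex.exp (-(2 * (Real.pi : ℂ) * Complex.I *
          ((((j : ℕ) * N + (b : ℕ)) * ((k : Fin (N * M)) : ℕ) : ℕ) : ℂ)) / ((N * M : ℕ) : ℂ)))
    (q : Fin M → ℂ)
    (hq : ∀ j : Fin M,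
      q j = Complex.exp (-(2 * (Real.pi : ℂ) * Complex.I * (((j : ℕ) * m : ℕ) : ℂ)) / (M : ℂ))) :
    Qbar * Qbarᴴ =
        ((M * N : ℕ) : ℂ) • (1 : Matrix (Fin M × Fin N) (Fin M × Fin N) ℂ) -
          (N : ℂ) • ((Matrix.of fun l k : Fin M => q l * star (q k)) ⊗ₖ
            (1 : Matrix (Fin N) (Fin N) ℂ)) ∧
      ((Matrix.of fun l k : Fin M => q l * star (q k)) ⊗ₖ
        (1 : Matrix (Fin N) (Fin N) ℂ)) * Qbar = 0 := by
  have hN0 : 0 < N := hN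
  have hM0 : 0 < M := hM
  have hc : N * M ≠ 0 := by positivity
  have hmM : m < M := by omega
  have hNC : ((N : ℕ) : ℂ) ≠ 0 := Nat.cast_ne_zero.mpr hN0.ne'
  have hMC : ((M : ℕ) : ℂ) ≠ 0 := Nat.cast_ne_zero.mpr hM0.ne'
  have hQ' : ∀ (j : Fin M) (b : Fin N)
      (k : {k : Fin (N * M) // ∀ n : Fin N, (k : ℕ) ≠ m + (n : ℕ) * M}),
      Qbar (j, b) k
        = ee (N * M) (-((((j : ℕ) : ℤ) * N + ((b : ℕ) : ℤ)) * (((k.1 : ℕ) : ℤ)))) := by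
    intro j b k
    rw [hQbar, ee_eq_exp]
    congr 1
    push_cast
    field_simp
  have hq' : ∀ j : Fin M, q j = ee (N * M) (-(((j : ℕ) : ℤ) * m * N)) := by
    intro j
    rw [hq, ee_eq_exp]
    congr 1
    push_cast
    field_simp
  have hsq : ∀ j : Fin M, star (q j) = ee (N * M) (((j : ℕ) : ℤ) * m * N) := by
    intro j
    rw [hq' j, star_ee, neg_neg]
  constructor
  · ext ⟨j, b⟩ ⟨j', b'⟩
    rw [Matrix.mul_apply]
    set d : ℤ := (((j' : ℕ) : ℤ) * N + ((b' : ℕ) : ℤ)) - (((j : ℕ) : ℤ) * N + ((b : ℕ) : ℤ))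
      with hd
    have hterm : ∀ k : {k : Fin (N * M) // ∀ n : Fin N, (k : ℕ) ≠ m + (n : ℕ) * M},
        Qbar (j, b) k * Qbarᴴ k (j', b') = ee (N * M) (d * ((k.1 : ℕ) : ℤ)) := by
      intro k
      rw [Matrix.conjTranspose_apply, hQ', hQ', star_ee, neg_neg, ← ee_add]
      congr 1
      rw [hd]; ring
    rw [Finset.sum_congr rfl (fun k _ => hterm k)]
    rw [show (∑ k : {k : Fin (N * M) // ∀ n : Fin N, (k : ℕ) ≠ m + (n : ℕ) * M},
        ee (N * M) (d * ((k.1 : ℕ) : ℤ)))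
      = ∑ k : {k : Fin (N * M) // ∀ n : Fin N, (k : ℕ) ≠ m + (n : ℕ) * M},
        (fun x : Fin (N * M) => ee (N * M) (d * ((x : ℕ) : ℤ))) k.1 from rfl]
    rw [sum_split m hM0 hmM (fun x : Fin (N * M) => ee (N * M) (d * ((x : ℕ) : ℤ)))]
    rw [sum_ee (N * M) hc (N * M) d (dvd_mul_left _ _)]
    have hrem : ∀ n : Fin N,
        (fun x : Fin (N * M) => ee (N * M) (d * ((x : ℕ) : ℤ)))
            (⟨m + (n : ℕ) * M, gbound m hmM n⟩ : Fin (N * M))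
          = ee (N * M) (d * m) * ee (N * M) ((d * M) * ((n : ℕ) : ℤ)) := by
      intro n
      simp only
      rw [← ee_add]
      congr 1
      push_cast
      ring
    rw [Finset.sum_congr rfl (fun n _ => hrem n), ← Finset.mul_sum,
      sum_ee (N * M) hc N (d * M) ⟨d, by push_cast; ring⟩]
    have hbound : -(((N * M : ℕ) : ℤ)) < d ∧ d < ((N * M : ℕ) : ℤ) := by
      have h1 := abound hN0 j b
      have h2 := abound hN0 j' b'
      have h3 : (0 : ℤ) ≤ ((j : ℕ) : ℤ) * N + ((b : ℕ) : ℤ) := by positivity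
      have h4 : (0 : ℤ) ≤ ((j' : ℕ) : ℤ) * N + ((b' : ℕ) : ℤ) := by positivity
      constructor <;> [skip; skip] <;> (rw [hd]; push_cast; push_cast at h1 h2; omega)
    have hcond1 : (ee (N * M) d = 1) ↔ (j = j' ∧ b = b') := by
      rw [ee_eq_one_iff _ hc, ← keyNM hN0 hM0 j j' b b']
      constructor
      · intro h
        exact dvd_small _ _ (by positivity) hbound.1 hbound.2 h
      · intro h
        have hd0 : d = 0 := h
        rw [hd0]
        exact dvd_zero _
    have hcond2 : (ee (N * M) (d * M) = 1) ↔ b = b' := by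
      rw [ee_eq_one_iff _ hc, ← keyN hN0 j j' b b']
      have hMZ : (M : ℤ) ≠ 0 := by exact_mod_cast hM0.ne'
      constructor
      · rintro ⟨t, ht⟩
        refine ⟨t, ?_⟩
        apply mul_right_cancel₀ hMZ
        push_cast at ht
        linear_combination ht
      · rintro ⟨t, ht⟩
        exact ⟨t, by rw [hd, ht]; push_cast; ring⟩
    have hqq : ∀ (x y : Fin M), q x * star (q y)
        = ee (N * M) ((((y : ℕ) : ℤ) - ((x : ℕ) : ℤ)) * m * N) := by
      intro x y
      rw [hq', hsq, ← ee_add]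
      congr 1
      ring
    simp only [Matrix.sub_apply, Matrix.smul_apply, Matrix.one_apply,
      Matrix.kroneckerMap_apply, Matrix.of_apply, smul_eq_mul, Prod.mk.injEq]
    by_cases hb : b = b'
    · subst hb
      by_cases hj : j = j'
      · subst hj
        rw [if_pos (hcond1.mpr ⟨rfl, rfl⟩), if_pos (hcond2.mpr rfl)]
        have hd0 : d = 0 := (keyNM hN0 hM0 j j b b).mpr ⟨rfl, rfl⟩
        rw [if_pos ⟨rfl, rfl⟩, hqq, hd0]
        simp only [zero_mul, ee_zero, sub_self, mul_one, one_mul]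
        push_cast
        ring
      · rw [if_neg (fun h => hj (hcond1.mp h).1), if_pos (hcond2.mpr rfl),
          if_neg (fun h => hj h.1), hqq]
        have hdm : ee (N * M) (d * m)
            = ee (N * M) ((((j' : ℕ) : ℤ) - ((j : ℕ) : ℤ)) * m * N) := by
          congr 1
          rw [hd]; ring
        rw [hdm]
        simp [mul_comm]
    · rw [if_neg (fun h => hb (hcond1.mp h).2), if_neg (fun h => hb (hcond2.mp h)),
        if_neg (fun h => hb h.2)]
      simp [hb]
  · ext ⟨l, b⟩ k
    rw [Matrix.mul_apply, Fintype.sum_prod_type]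
    simp only [Matrix.kroneckerMap_apply, Matrix.of_apply, Matrix.one_apply, Matrix.zero_apply,
      mul_ite, mul_one, mul_zero, ite_mul, zero_mul, Finset.sum_ite_eq, Finset.mem_univ, if_true]
    have hterm : ∀ j : Fin M, q l * star (q j) * Qbar (j, b) k
        = q l * (ee (N * M) (-(((b : ℕ) : ℤ) * ((k.1 : ℕ) : ℤ)))
            * ee (N * M) (((N : ℤ) * ((m : ℤ) - ((k.1 : ℕ) : ℤ))) * ((j : ℕ) : ℤ))) := by
      intro j
      rw [hsq, hQ', mul_assoc, ← ee_add, ← ee_add]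
      congr 2
      ring
    rw [Finset.sum_congr rfl (fun j _ => hterm j), ← Finset.mul_sum, ← Finset.mul_sum]
    have hdvd : ((N * M : ℕ) : ℤ) ∣ ((N : ℤ) * ((m : ℤ) - ((k.1 : ℕ) : ℤ))) * (M : ℤ) :=
      ⟨(m : ℤ) - ((k.1 : ℕ) : ℤ), by push_cast; ring⟩
    have hsum : ∑ j : Fin M, ee (N * M) (((N : ℤ) * ((m : ℤ) - ((k.1 : ℕ) : ℤ))) * ((j : ℕ) : ℤ))
        = 0 := by
      rw [sum_ee (N * M) hc M _ hdvd, if_neg]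
      rw [ee_eq_one_iff _ hc]
      intro hdv
      have hNZ : (N : ℤ) ≠ 0 := by exact_mod_cast hN0.ne'
      have hMdvd : (M : ℤ) ∣ (m : ℤ) - ((k.1 : ℕ) : ℤ) := by
        rcases hdv with ⟨t, ht⟩
        refine ⟨t, ?_⟩
        apply mul_left_cancel₀ hNZ
        push_cast at ht
        linear_combination ht
      rcases hMdvd with ⟨t, ht⟩
      have hkb : ((k.1 : ℕ) : ℤ) < (N : ℤ) * M := by exact_mod_cast k.1.2
      have hmMZ : (m : ℤ) < M := by exact_mod_cast hmM
      have hk0 : (0 : ℤ) ≤ ((k.1 : ℕ) : ℤ) := by positivity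
      have hMZ : (0 : ℤ) < M := by exact_mod_cast hM0
      have htle : t ≤ 0 := by
        by_contra hpos
        push_neg at hpos
        have h1 : (M : ℤ) ≤ M * t := le_mul_of_one_le_right hMZ.le hpos
        linarith
      have hku : ((k.1 : ℕ) : ℤ) = m + ((-t).toNat : ℤ) * M := by
        rw [Int.toNat_of_nonneg (by omega)]
        linear_combination -ht
      have huN : (-t).toNat < N := by
        have h1 : (((-t).toNat : ℤ)) * M < (N : ℤ) * M := by linarith
        have h2 : (((-t).toNat : ℤ)) < N := lt_of_mul_lt_mul_right h1 hMZ.le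
        exact_mod_cast h2
      exact k.2 ⟨(-t).toNat, huN⟩ (by exact_mod_cast hku)
    rw [hsum, mul_zero, mul_zero]
end

section
/- Let M ≥ 2 and N ≥ 1 be integers, α > 0 a real number, and q ∈ ℂ^M a vector all of whose entries have modulus 1. For 1 ≤ i ≤ M let I_{M,i} ∈ ℂ^{(M−1)×M} denote the identity matrix I_M with its i-th row removed, and let S̄_(i) = I_{M,i} ⊗ I_N ∈ ℂ^{(M−1)N×MN}. Then the matrix I_{(M−1)N} + α·S̄_(i)·(MN·I_{MN} − N·(qq^H ⊗ I_N))·S̄_(i)^T is invertible and its inverse equals (1/(1+NMα)) · [(I_{M−1} + (Nα/(1+Nα))·I_{M,i} qq^H I_{M,i}^T) ⊗ I_N]. -/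
open Matrix Kronecker

/-- The matrix `I_{M,i} ∈ ℂ^{(M-1)×M}`: the identity matrix `I_M` with its `i`-th row
removed; its row `j` is the standard basis row vector with the `1` in position `j` if
`j < i` and in position `j + 1` otherwise. -/
noncomputable def rowRemoved (M : ℕ) (i : Fin M) : Matrix (Fin (M - 1)) (Fin M) ℂ :=
  Matrix.of fun j k =>
    if (k : ℕ) = (if (j : ℕ) < (i : ℕ) then (j : ℕ) else (j : ℕ) + 1) then 1 else 0

/-- `S̄_(i) = I_{M,i} ⊗ I_N`. -/
noncomputable def sBar (M N : ℕ) (i : Fin M) :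
    Matrix (Fin (M - 1) × Fin N) (Fin M × Fin N) ℂ :=
  rowRemoved M i ⊗ₖ (1 : Matrix (Fin N) (Fin N) ℂ)

/-- The embedding `Fin (M-1) → Fin M` skipping `i`. -/
def fOut (M : ℕ) (i : Fin M) (j : Fin (M - 1)) : Fin M :=
  ⟨if (j : ℕ) < (i : ℕ) then (j : ℕ) else (j : ℕ) + 1, by
    have h1 := j.2; have h2 := i.2; split <;> omega⟩

lemma fOut_inj {M : ℕ} (i : Fin M) (j j' : Fin (M - 1)) :
    fOut M i j = fOut M i j' ↔ j = j' := by
  simp only [fOut, Fin.ext_iff]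
  split_ifs <;> omega

lemma rowRemoved_apply_eq {M : ℕ} (i : Fin M) (j : Fin (M - 1)) (k : Fin M) :
    rowRemoved M i j k = if k = fOut M i j then 1 else 0 := by
  simp only [rowRemoved, fOut, Matrix.of_apply, Fin.ext_iff]

lemma rowRemoved_mul_transpose {M : ℕ} (i : Fin M) :
    rowRemoved M i * (rowRemoved M i)ᵀ = 1 := by
  ext j j'
  simp only [mul_apply, transpose_apply, rowRemoved_apply_eq, one_apply, ite_mul, one_mul,
    zero_mul, Finset.sum_ite_eq', Finset.mem_univ, if_true]
  by_cases h : j = j'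
  · simp [h]
  · have h2 : ¬ (fOut M i j = fOut M i j') := by rw [fOut_inj]; exact h
    have h3 : ¬ (fOut M i j' = fOut M i j) := fun hc => h2 hc.symm
    simp [h, h2, h3]

lemma EPEt_apply {M : ℕ} (i : Fin M) (q : Fin M → ℂ) (j j' : Fin (M - 1)) :
    (rowRemoved M i * (Matrix.of fun l k : Fin M => q l * star (q k)) *
      (rowRemoved M i)ᵀ) j j' = q (fOut M i j) * star (q (fOut M i j')) := by
  simp only [mul_apply, transpose_apply, rowRemoved_apply_eq, Matrix.of_apply, ite_mul, one_mul,
    zero_mul, mul_ite, mul_one, mul_zero, Finset.sum_ite_eq', Finset.mem_univ, if_true]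

lemma unit_sq {z : ℂ} (hz : ‖z‖ = 1) : star z * z = 1 := by
  rw [Complex.star_def, mul_comm, Complex.mul_conj, ← Complex.sq_norm, hz]
  norm_num

lemma Q_sq {M : ℕ} (hM : 2 ≤ M) (i : Fin M) (q : Fin M → ℂ)
    (hq : ∀ j : Fin M, ‖q j‖ = 1) :
    (rowRemoved M i * (Matrix.of fun l k : Fin M => q l * star (q k)) * (rowRemoved M i)ᵀ) *
      (rowRemoved M i * (Matrix.of fun l k : Fin M => q l * star (q k)) * (rowRemoved M i)ᵀ)
      = ((M : ℂ) - 1) •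
        (rowRemoved M i * (Matrix.of fun l k : Fin M => q l * star (q k)) *
          (rowRemoved M i)ᵀ) := by
  ext j j'
  rw [Matrix.smul_apply, mul_apply]
  simp only [EPEt_apply]
  have : ∀ j'' : Fin (M - 1),
      q (fOut M i j) * star (q (fOut M i j'')) * (q (fOut M i j'') * star (q (fOut M i j')))
      = q (fOut M i j) * star (q (fOut M i j')) := by
    intro j''
    have h := unit_sq (hq (fOut M i j''))
    ring_nf
    calc q (fOut M i j) * star (q (fOut M i j'')) * q (fOut M i j'') * star (q (fOut M i j'))
        = q (fOut M i j) * (star (q (fOut M i j'')) * q (fOut M i j'')) *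
            star (q (fOut M i j')) := by ring
      _ = q (fOut M i j) * star (q (fOut M i j')) := by rw [h]; ring
  rw [Finset.sum_congr rfl fun j'' _ => this j'', Finset.sum_const, Finset.card_univ,
    Fintype.card_fin, nsmul_eq_mul, smul_eq_mul]
  have : ((M - 1 : ℕ) : ℂ) = (M : ℂ) - 1 := by
    have : (1 : ℕ) ≤ M := by omega
    push_cast [this]; ring
  rw [this]

lemma combo {n : Type*} [Fintype n] [DecidableEq n] (K : Matrix n n ℂ) (μ s t c e : ℂ)
    (hK : K * K = μ • K) (h1 : s * c = 1) (h2 : s * e - t * c - t * e * μ = 0) :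
    (s • (1 : Matrix n n ℂ) - t • K) * (c • (1 : Matrix n n ℂ) + e • K) = 1 ∧
    (c • (1 : Matrix n n ℂ) + e • K) * (s • (1 : Matrix n n ℂ) - t • K) = 1 := by
  have key : ∀ x y z w : ℂ, (x • (1 : Matrix n n ℂ) + y • K) * (z • (1 : Matrix n n ℂ) + w • K)
      = (x * z) • (1 : Matrix n n ℂ) + (x * w + y * z + y * w * μ) • K := by
    intro x y z w
    simp only [add_mul, mul_add, smul_mul_assoc, mul_smul_comm, one_mul, mul_one,
      smul_smul, hK]
    module
  constructor
  · rw [sub_eq_add_neg, ← neg_smul, key]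
    rw [show s * e + -t * c + -t * e * μ = s * e - t * c - t * e * μ by ring, h2, h1]
    simp
  · rw [sub_eq_add_neg, ← neg_smul, key]
    rw [show c * -t + e * s + e * -t * μ = s * e - t * c - t * e * μ by ring, h2,
      show c * s = s * c by ring, h1]
    simp

/-- For `M ≥ 2`, `N ≥ 1`, `α > 0` and a vector `q ∈ ℂ^M` of unit-modulus
entries, the matrix `I + α·S̄_(i)·(MN·I − N·(qqᴴ ⊗ I_N))·S̄_(i)ᵀ` is invertible with
inverse `(1/(1+NMα)) · [(I_{M-1} + (Nα/(1+Nα))·I_{M,i} qqᴴ I_{M,i}ᵀ) ⊗ I_N]`. -/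
theorem stmt_2 (M N : ℕ) (hM : 2 ≤ M) (hN : 1 ≤ N) (α : ℝ) (hα : 0 < α)
    (q : Fin M → ℂ) (hq : ∀ j : Fin M, ‖q j‖ = 1) (i : Fin M)
    (A : Matrix (Fin (M - 1) × Fin N) (Fin (M - 1) × Fin N) ℂ)
    (hA : A = 1 + (α : ℂ) •
      (sBar M N i *
        (((M * N : ℕ) : ℂ) • (1 : Matrix (Fin M × Fin N) (Fin M × Fin N) ℂ) -
          (N : ℂ) • ((Matrix.of fun l k : Fin M => q l * star (q k)) ⊗ₖ
            (1 : Matrix (Fin N) (Fin N) ℂ))) * (sBar M N i)ᵀ))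
    (B : Matrix (Fin (M - 1) × Fin N) (Fin (M - 1) × Fin N) ℂ)
    (hB : B = (((1 + (N : ℝ) * (M : ℝ) * α)⁻¹ : ℝ) : ℂ) •
      (((1 : Matrix (Fin (M - 1)) (Fin (M - 1)) ℂ) +
          ((((N : ℝ) * α / (1 + (N : ℝ) * α)) : ℝ) : ℂ) •
            (rowRemoved M i * (Matrix.of fun l k : Fin M => q l * star (q k)) *
              (rowRemoved M i)ᵀ)) ⊗ₖ (1 : Matrix (Fin N) (Fin N) ℂ))) :
    A * B = 1 ∧ B * A = 1 := by
  set P : Matrix (Fin M) (Fin M) ℂ := Matrix.of fun l k : Fin M => q l * star (q k) with hP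
  set Q : Matrix (Fin (M - 1)) (Fin (M - 1)) ℂ :=
    rowRemoved M i * P * (rowRemoved M i)ᵀ with hQ
  set K : Matrix (Fin (M - 1) × Fin N) (Fin (M - 1) × Fin N) ℂ :=
    Q ⊗ₖ (1 : Matrix (Fin N) (Fin N) ℂ) with hK
  have ht : (sBar M N i)ᵀ = (rowRemoved M i)ᵀ ⊗ₖ (1 : Matrix (Fin N) (Fin N) ℂ) := by
    rw [sBar, ← Matrix.kroneckerMap_transpose, Matrix.transpose_one]
  have hSSt : sBar M N i * (sBar M N i)ᵀ = 1 := by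
    rw [ht, sBar, ← Matrix.mul_kronecker_mul, rowRemoved_mul_transpose, one_mul,
      Matrix.one_kronecker_one]
  have hSP : sBar M N i * (P ⊗ₖ (1 : Matrix (Fin N) (Fin N) ℂ)) * (sBar M N i)ᵀ = K := by
    rw [ht, sBar, ← Matrix.mul_kronecker_mul, ← Matrix.mul_kronecker_mul, one_mul, one_mul, hK, hQ]
  have hK2 : K * K = ((M : ℂ) - 1) • K := by
    rw [hK, ← Matrix.mul_kronecker_mul, one_mul, hQ, Q_sq hM i q hq, Matrix.smul_kronecker]
  set s : ℂ := 1 + (α : ℂ) * ((M * N : ℕ) : ℂ) with hs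
  set t : ℂ := (α : ℂ) * (N : ℂ) with hts
  set cc : ℂ := (((1 + (N : ℝ) * (M : ℝ) * α)⁻¹ : ℝ) : ℂ) with hcc
  set dd : ℂ := ((((N : ℝ) * α / (1 + (N : ℝ) * α)) : ℝ) : ℂ) with hdd
  have hA' : A = s • (1 : Matrix (Fin (M - 1) × Fin N) (Fin (M - 1) × Fin N) ℂ) - t • K := by
    rw [hA, Matrix.mul_sub, Matrix.sub_mul, Matrix.mul_smul, Matrix.smul_mul, Matrix.mul_smul,
      Matrix.smul_mul, Matrix.mul_one, hSSt, hSP, smul_sub, smul_smul, smul_smul, hs, hts]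
    module
  have hB' : B = cc • (1 : Matrix (Fin (M - 1) × Fin N) (Fin (M - 1) × Fin N) ℂ) +
      (cc * dd) • K := by
    rw [hB, Matrix.add_kronecker, Matrix.one_kronecker_one, Matrix.smul_kronecker, smul_add,
      smul_smul, hQ, hK]
  have hR1 : (1 + (N : ℝ) * (M : ℝ) * α) ≠ 0 := by positivity
  have hR2 : (1 + (N : ℝ) * α) ≠ 0 := by positivity
  have hC1 : ((1 : ℂ) + (N : ℂ) * (M : ℂ) * (α : ℂ)) ≠ 0 := by
    have h := Complex.ofReal_ne_zero.mpr hR1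
    push_cast at h
    exact h
  have hC2 : ((1 : ℂ) + (N : ℂ) * (α : ℂ)) ≠ 0 := by
    have h := Complex.ofReal_ne_zero.mpr hR2
    push_cast at h
    exact h
  have h1 : s * cc = 1 := by
    rw [hs, hcc]
    push_cast
    rw [mul_inv_eq_one₀ hC1]
    ring
  have h2 : s * (cc * dd) - t * cc - t * (cc * dd) * ((M : ℂ) - 1) = 0 := by
    rw [hs, hts, hcc, hdd]
    push_cast
    rw [div_eq_mul_inv]
    generalize ha : (1 + (N : ℂ) * (M : ℂ) * (α : ℂ))⁻¹ = a
    generalize hb : (1 + (N : ℂ) * (α : ℂ))⁻¹ = b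
    have eb : b * (1 + (N : ℂ) * (α : ℂ)) = 1 := by rw [← hb]; exact inv_mul_cancel₀ hC2
    linear_combination (N * α * a) * eb
  rw [hA', hB']
  exact combo K ((M : ℂ) - 1) s t cc (cc * dd) hK2 h1 h2
end

section
/- Let M ≥ 2, N ≥ 1 be integers, 0 ≤ m ≤ M−1, and α > 0. Let Q̄_m ∈ ℂ^{NM×(M−1)N} be the NM-point DFT matrix with the N columns indexed {m+nM : 0 ≤ n ≤ N−1} removed, let q_m ∈ ℂ^M have entries (q_m)_j = exp(−2πi·jm/M), and set F = √α·Q̄_m. Then Σ_{i=1}^{M} S̄_(i)^T · (I_{(M−1)N} + S̄_(i) F F^H S̄_(i)^T)^{−2} · S̄_(i) = (1/(1+NMα)^2) · [((M−1+β)·I_M + β(M−2)·q_m q_m^H) ⊗ I_N], where β = (2Nα(1+Nα) + N²α²(M−1))/(1+Nα)². -/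
open Matrix Kronecker

/- ----------------- auxiliary lemmas ----------------- -/

lemma sum_exp_fin (L : ℕ) (hL : 0 < L) (t : ℤ) :
    ∑ k : Fin L, Complex.exp (2 * Real.pi * Complex.I * t * k / L) =
      if (L : ℤ) ∣ t then (L : ℂ) else 0 := by
  have hL0 : (L : ℂ) ≠ 0 := Nat.cast_ne_zero.mpr hL.ne'
  have hkey : ∀ k : Fin L,
      Complex.exp (2 * Real.pi * Complex.I * t * k / L)
        = Complex.exp (2 * Real.pi * Complex.I * t / L) ^ (k : ℕ) := by
    intro k
    rw [← Complex.exp_nat_mul]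
    congr 1
    ring
  simp_rw [hkey]
  set ζ : ℂ := Complex.exp (2 * Real.pi * Complex.I * t / L) with hζ
  by_cases h : (L : ℤ) ∣ t
  · obtain ⟨n, rfl⟩ := h
    have hζ1 : ζ = 1 := by
      rw [hζ]
      have : (2 : ℂ) * Real.pi * Complex.I * ((L : ℤ) * n : ℤ) / L
          = (n : ℤ) * (2 * Real.pi * Complex.I) := by
        push_cast
        field_simp
      rw [this, Complex.exp_int_mul_two_pi_mul_I]
    rw [if_pos ⟨n, rfl⟩, hζ1]
    simp
  · have hζ1 : ζ ≠ 1 := by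
      intro hc
      rw [hζ, Complex.exp_eq_one_iff] at hc
      obtain ⟨n, hn⟩ := hc
      apply h
      refine ⟨n, ?_⟩
      have hπ : (Real.pi : ℂ) ≠ 0 := by
        exact_mod_cast Real.pi_ne_zero
      have h2 : (2 * (Real.pi : ℂ) * Complex.I) ≠ 0 :=
        mul_ne_zero (mul_ne_zero two_ne_zero hπ) Complex.I_ne_zero
      have h3 : (2 * (Real.pi : ℂ) * Complex.I) * t
          = (2 * (Real.pi : ℂ) * Complex.I) * ((L : ℂ) * n) := by
        have h4 := congrArg (fun z => z * (L : ℂ)) hn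
        simp only [div_mul_cancel₀ _ hL0] at h4
        linear_combination h4
      have : (t : ℂ) = (L : ℂ) * n := mul_left_cancel₀ h2 h3
      exact_mod_cast this
    rw [Fin.sum_univ_eq_sum_range, geom_sum_eq hζ1]
    have hζL : ζ ^ L = 1 := by
      rw [hζ, ← Complex.exp_nat_mul]
      have : (L : ℂ) * (2 * Real.pi * Complex.I * t / L) = (t : ℤ) * (2 * Real.pi * Complex.I) := by
        field_simp
      rw [this, Complex.exp_int_mul_two_pi_mul_I]
    rw [hζL]
    simp [h]

lemma sum_subtype_split (M N : ℕ) (hM : 0 < M) (m : ℕ)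
    (hlt : ∀ n : Fin N, m + (n : ℕ) * M < N * M) (g : Fin (N * M) → ℂ) :
    (∑ k : {k : Fin (N * M) // ∀ n : Fin N, (k : ℕ) ≠ m + (n : ℕ) * M}, g k)
      = (∑ k : Fin (N * M), g k) - ∑ n : Fin N, g ⟨m + (n : ℕ) * M, hlt n⟩ := by
  classical
  set p : Fin (N * M) → Prop := fun k => ∀ n : Fin N, (k : ℕ) ≠ m + (n : ℕ) * M with hp
  have h1 : (∑ k : {k : Fin (N * M) // p k}, g ↑k)
      = ∑ k ∈ Finset.univ.filter p, g k := by
    rw [Finset.sum_subtype (p := p) (Finset.univ.filter p) (fun x => by simp) g]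
  have h2 : (∑ k ∈ Finset.univ.filter p, g k) + (∑ k ∈ Finset.univ.filter (fun k => ¬ p k), g k)
      = ∑ k : Fin (N * M), g k := Finset.sum_filter_add_sum_filter_not _ _ _
  have h3 : Finset.univ.filter (fun k => ¬ p k)
      = Finset.image (fun n : Fin N => (⟨m + (n : ℕ) * M, hlt n⟩ : Fin (N * M))) Finset.univ := by
    ext k
    simp only [Finset.mem_filter, Finset.mem_univ, true_and, Finset.mem_image, hp]
    push_neg
    constructor
    · rintro ⟨n, hn⟩
      exact ⟨n, by apply Fin.ext; simp [hn.symm]⟩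
    · rintro ⟨n, rfl⟩
      exact ⟨n, rfl⟩
  have h4 : (∑ k ∈ Finset.univ.filter (fun k => ¬ p k), g k)
      = ∑ n : Fin N, g ⟨m + (n : ℕ) * M, hlt n⟩ := by
    rw [h3]
    refine Finset.sum_image ?_
    intro n _ n' _ h
    have := congrArg Fin.val h
    simp only at this
    have : (n : ℕ) * M = (n' : ℕ) * M := by omega
    exact Fin.ext (Nat.eq_of_mul_eq_mul_right hM this)
  calc (∑ k : {k // p k}, g ↑k)
      = ∑ k ∈ Finset.univ.filter p, g k := h1
    _ = (∑ k : Fin (N * M), g k) - ∑ k ∈ Finset.univ.filter (fun k => ¬ p k), g k := by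
        rw [← h2]; ring
    _ = _ := by rw [h4]

lemma q_exp_eq (M N : ℕ) (hM : 0 < M) (hN : 0 < N) (m : ℕ)
    (q : Fin M → ℂ)
    (hq : ∀ j : Fin M,
      q j = Complex.exp (-(2 * (Real.pi : ℂ) * Complex.I * (((j : ℕ) * m : ℕ) : ℂ)) / (M : ℂ)))
    (j j' : Fin M) (t : ℤ) (ht : t = (((j' : ℕ) : ℤ) - ((j : ℕ) : ℤ)) * N) :
    Complex.exp (2 * Real.pi * Complex.I * t * (m : ℂ) / ((N * M : ℕ) : ℂ))
      = q j * star (q j') := by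
  have hMc : (M : ℂ) ≠ 0 := Nat.cast_ne_zero.mpr hM.ne'
  have hNc : (N : ℂ) ≠ 0 := Nat.cast_ne_zero.mpr hN.ne'
  have hstar : star (q j') = Complex.exp ((2 * (Real.pi : ℂ) * Complex.I * (((j' : ℕ) * m : ℕ) : ℂ)) / (M : ℂ)) := by
    rw [hq j', Complex.star_def, ← Complex.exp_conj]
    congr 1
    simp [map_div₀, Complex.conj_I, map_ofNat]
  rw [hq j, hstar, ← Complex.exp_add]
  congr 1
  subst ht
  push_cast
  field_simp
  ring

lemma q_unit (M : ℕ) (m : ℕ)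
    (q : Fin M → ℂ)
    (hq : ∀ j : Fin M,
      q j = Complex.exp (-(2 * (Real.pi : ℂ) * Complex.I * (((j : ℕ) * m : ℕ) : ℂ)) / (M : ℂ)))
    (j : Fin M) : q j * star (q j) = 1 := by
  have : star (q j) = Complex.exp ((2 * (Real.pi : ℂ) * Complex.I * (((j : ℕ) * m : ℕ) : ℂ)) / (M : ℂ)) := by
    rw [hq j, Complex.star_def, ← Complex.exp_conj]
    congr 1
    simp [map_div₀, Complex.conj_I, map_ofNat]
  rw [this, hq j, ← Complex.exp_add, ← add_div, neg_add_cancel, zero_div,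
    Complex.exp_zero]

lemma QbarQbarH (M N : ℕ) (hM : 2 ≤ M) (hN : 1 ≤ N) (m : ℕ) (hm : m ≤ M - 1)
    (Qbar : Matrix (Fin M × Fin N)
      {k : Fin (N * M) // ∀ n : Fin N, (k : ℕ) ≠ m + (n : ℕ) * M} ℂ)
    (hQbar : ∀ (j : Fin M) (b : Fin N)
        (k : {k : Fin (N * M) // ∀ n : Fin N, (k : ℕ) ≠ m + (n : ℕ) * M}),
      Qbar (j, b) k =
        Complex.exp (-(2 * (Real.pi : ℂ) * Complex.I *
          ((((j : ℕ) * N + (b : ℕ)) * ((k : Fin (N * M)) : ℕ) : ℕ) : ℂ)) / ((N * M : ℕ) : ℂ)))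
    (q : Fin M → ℂ)
    (hq : ∀ j : Fin M,
      q j = Complex.exp (-(2 * (Real.pi : ℂ) * Complex.I * (((j : ℕ) * m : ℕ) : ℂ)) / (M : ℂ))) :
    Qbar * Qbarᴴ = (((N * M : ℕ) : ℂ)) • (1 : Matrix (Fin M × Fin N) (Fin M × Fin N) ℂ)
      - ((N : ℂ)) • ((Matrix.of fun l k : Fin M => q l * star (q k)) ⊗ₖ
          (1 : Matrix (Fin N) (Fin N) ℂ)) := by
  have hM0 : 0 < M := by omega
  have hN0 : 0 < N := by omega
  have hNM0 : 0 < N * M := Nat.mul_pos hN0 hM0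
  have hNMc : ((N * M : ℕ) : ℂ) ≠ 0 := Nat.cast_ne_zero.mpr hNM0.ne'
  have hlt : ∀ n : Fin N, m + (n : ℕ) * M < N * M := by
    intro n
    have h1 : m < M := by omega
    have h2 : (n : ℕ) + 1 ≤ N := n.isLt
    calc m + (n : ℕ) * M < M + (n : ℕ) * M := by omega
      _ = ((n : ℕ) + 1) * M := by ring
      _ ≤ N * M := Nat.mul_le_mul_right M h2
  ext ⟨j, b⟩ ⟨j', b'⟩
  rw [Matrix.mul_apply]
  set t : ℤ := (((j' : ℕ) * N + (b' : ℕ) : ℕ) : ℤ) - (((j : ℕ) * N + (b : ℕ) : ℕ) : ℤ) with ht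
  have hterm : ∀ k : {k : Fin (N * M) // ∀ n : Fin N, (k : ℕ) ≠ m + (n : ℕ) * M},
      Qbar (j, b) k * Qbarᴴ k (j', b') =
        Complex.exp (2 * Real.pi * Complex.I * t * (((k : Fin (N * M)) : ℕ) : ℂ)
          / ((N * M : ℕ) : ℂ)) := by
    intro k
    rw [Matrix.conjTranspose_apply, hQbar, hQbar, Complex.star_def, ← Complex.exp_conj,
      ← Complex.exp_add]
    congr 1
    simp [map_div₀, Complex.conj_I, map_ofNat]
    rw [ht]
    push_cast
    field_simp
    ring
  simp_rw [hterm]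
  rw [sum_subtype_split M N hM0 m hlt
    (fun k => Complex.exp (2 * Real.pi * Complex.I * t * ((k : ℕ) : ℂ) / ((N * M : ℕ) : ℂ)))]
  rw [sum_exp_fin (N * M) hNM0 t]
  have hsplit : ∀ n : Fin N,
      Complex.exp (2 * Real.pi * Complex.I * t *
          (((⟨m + (n : ℕ) * M, hlt n⟩ : Fin (N * M)) : ℕ) : ℂ) / ((N * M : ℕ) : ℂ))
        = Complex.exp (2 * Real.pi * Complex.I * t * (m : ℂ) / ((N * M : ℕ) : ℂ))
          * Complex.exp (2 * Real.pi * Complex.I * t * ((n : ℕ) : ℂ) / ((N : ℕ) : ℂ)) := by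
    intro n
    rw [← Complex.exp_add]
    congr 1
    have hNc' : (N : ℂ) ≠ 0 := Nat.cast_ne_zero.mpr hN0.ne'
    have hMc' : (M : ℂ) ≠ 0 := Nat.cast_ne_zero.mpr hM0.ne'
    push_cast
    field_simp
  simp_rw [hsplit]
  rw [← Finset.mul_sum, sum_exp_fin N hN0 t]
  by_cases hbb : b = b'
  · subst hbb
    by_cases hjj : j = j'
    · subst hjj
      have ht0 : t = 0 := by rw [ht]; ring
      rw [ht0]
      have hqu := q_unit M m q hq j
      simp [Matrix.one_apply]
      rw [show q j * (starRingEnd ℂ) (q j) = 1 from hqu, mul_one]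
    · have htval : t = (((j' : ℕ) : ℤ) - ((j : ℕ) : ℤ)) * N := by rw [ht]; push_cast; ring
      have hNdvd : (N : ℤ) ∣ t := ⟨(((j' : ℕ) : ℤ) - ((j : ℕ) : ℤ)), by rw [htval]; ring⟩
      have hNMdvd : ¬ ((↑(N * M) : ℤ) ∣ t) := by
        rintro ⟨u, hu⟩
        rw [htval] at hu
        push_cast at hu
        have hNz : (N : ℤ) ≠ 0 := by exact_mod_cast hN0.ne'
        have h5 : ((j' : ℕ) : ℤ) - ((j : ℕ) : ℤ) = (M : ℤ) * u := by
          have h6 : (N : ℤ) * (((j' : ℕ) : ℤ) - ((j : ℕ) : ℤ))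
              = (N : ℤ) * ((M : ℤ) * u) := by linear_combination hu
          exact mul_left_cancel₀ hNz h6
        have habs : |(((j' : ℕ) : ℤ) - ((j : ℕ) : ℤ))| < (M : ℤ) := by
          have h7 := j.isLt
          have h8 := j'.isLt
          rw [abs_lt]
          omega
        have h9 := Int.eq_zero_of_abs_lt_dvd ⟨u, h5⟩ habs
        have h10 : (j' : ℕ) = (j : ℕ) := by omega
        exact hjj (Fin.ext h10.symm)
      rw [if_neg hNMdvd, if_pos hNdvd]
      rw [q_exp_eq M N hM0 hN0 m q hq j j' t htval]
      simp [Matrix.one_apply, Prod.ext_iff, hjj]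
      ring
  · have hNdvd : ¬ ((N : ℤ) ∣ t) := by
      rintro ⟨u, hu⟩
      rw [ht] at hu
      push_cast at hu
      have hdvd : (N : ℤ) ∣ ((b' : ℕ) : ℤ) - ((b : ℕ) : ℤ) :=
        ⟨u + ((j : ℕ) : ℤ) - ((j' : ℕ) : ℤ), by linear_combination hu⟩
      have habs : |((b' : ℕ) : ℤ) - ((b : ℕ) : ℤ)| < (N : ℤ) := by
        have h7 := b.isLt
        have h8 := b'.isLt
        rw [abs_lt]
        omega
      have h9 := Int.eq_zero_of_abs_lt_dvd hdvd habs
      have h10 : (b : ℕ) = (b' : ℕ) := by omega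
      exact hbb (Fin.ext h10)
    have hNMdvd : ¬ ((↑(N * M) : ℤ) ∣ t) := by
      intro h
      exact hNdvd (dvd_trans ⟨(M : ℤ), by push_cast; ring⟩ h)
    rw [if_neg hNMdvd, if_neg hNdvd]
    simp [Matrix.one_apply, Prod.ext_iff, hbb]

/-- The injection `Fin (M-1) → Fin M` skipping `i`. -/
def fI (M : ℕ) (i : Fin M) (j : Fin (M - 1)) : Fin M :=
  ⟨if (j : ℕ) < (i : ℕ) then (j : ℕ) else (j : ℕ) + 1, by
    have h1 := j.isLt
    have h2 := i.isLt
    split <;> omega⟩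

lemma rowRemoved_apply (M : ℕ) (i : Fin M) (j : Fin (M - 1)) (k : Fin M) :
    rowRemoved M i j k = if k = fI M i j then 1 else 0 := by
  simp [rowRemoved, fI, Fin.ext_iff]

lemma fI_injective (M : ℕ) (i : Fin M) : Function.Injective (fI M i) := by
  intro a b h
  have h1 := congrArg Fin.val h
  simp only [fI] at h1
  apply Fin.ext
  split_ifs at h1 <;> omega

lemma fI_ne (M : ℕ) (i : Fin M) (j : Fin (M - 1)) : fI M i j ≠ i := by
  intro h
  have h1 := congrArg Fin.val h
  simp only [fI] at h1
  split_ifs at h1 <;> omega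

lemma fI_surj (M : ℕ) (i k : Fin M) (h : k ≠ i) : ∃ j, fI M i j = k := by
  have hk := k.isLt
  have hi := i.isLt
  have hne : (k : ℕ) ≠ (i : ℕ) := fun hc => h (Fin.ext hc)
  by_cases hlt : (k : ℕ) < (i : ℕ)
  · refine ⟨⟨(k : ℕ), by omega⟩, Fin.ext ?_⟩
    simp only [fI]
    split <;> omega
  · refine ⟨⟨(k : ℕ) - 1, by omega⟩, Fin.ext ?_⟩
    simp only [fI]
    split <;> omega

lemma RRt (M : ℕ) (i : Fin M) : rowRemoved M i * (rowRemoved M i)ᵀ = 1 := by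
  ext a b
  simp only [Matrix.mul_apply, Matrix.transpose_apply, rowRemoved_apply]
  simp [ite_mul, Finset.sum_ite_eq', Matrix.one_apply, (fI_injective M i).eq_iff]
  exact if_congr eq_comm rfl rfl

lemma RtR (M : ℕ) (i : Fin M) :
    (rowRemoved M i)ᵀ * rowRemoved M i
      = Matrix.of fun k k' : Fin M => if k = k' ∧ k ≠ i then (1 : ℂ) else 0 := by
  ext k k'
  simp only [Matrix.mul_apply, Matrix.transpose_apply, rowRemoved_apply, Matrix.of_apply]
  by_cases hki : k = i
  · subst hki
    rw [if_neg (by tauto)]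
    apply Finset.sum_eq_zero
    intro j _
    rw [if_neg (fun hc => fI_ne M k j hc.symm), zero_mul]
  · by_cases hkk : k = k'
    · subst hkk
      rw [if_pos ⟨rfl, hki⟩]
      obtain ⟨j0, hj0⟩ := fI_surj M i k hki
      rw [Finset.sum_eq_single j0]
      · rw [if_pos hj0.symm, one_mul]
      · intro j _ hj
        rw [if_neg (fun hc => hj (fI_injective M i (hc.symm.trans hj0.symm))), zero_mul]
      · simp
    · rw [if_neg (by tauto)]
      apply Finset.sum_eq_zero
      intro j _
      by_cases h1 : k = fI M i j
      · rw [if_neg (show ¬ k' = fI M i j from fun hc => hkk (h1.trans hc.symm)), mul_zero]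
      · rw [if_neg h1, zero_mul]

lemma Dmul (M : ℕ) (i : Fin M) (X : Matrix (Fin M) (Fin M) ℂ) :
    (Matrix.of fun k k' : Fin M => if k = k' ∧ k ≠ i then (1 : ℂ) else 0) * X
      = Matrix.of fun k k' => if k ≠ i then X k k' else 0 := by
  ext k k'
  rw [Matrix.mul_apply, Matrix.of_apply]
  rw [Finset.sum_eq_single k]
  · by_cases h : k = i <;> simp [h]
  · intro a _ ha
    rw [Matrix.of_apply, if_neg (fun hc => ha hc.1.symm), zero_mul]
  · simp

lemma mulD (M : ℕ) (i : Fin M) (X : Matrix (Fin M) (Fin M) ℂ) :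
    X * (Matrix.of fun k k' : Fin M => if k = k' ∧ k ≠ i then (1 : ℂ) else 0)
      = Matrix.of fun k k' => if k' ≠ i then X k k' else 0 := by
  ext k k'
  rw [Matrix.mul_apply, Matrix.of_apply]
  rw [Finset.sum_eq_single k']
  · by_cases h : k' = i <;> simp [h]
  · intro a _ ha
    rw [Matrix.of_apply, if_neg (fun hc => ha hc.1), mul_zero]
  · simp

lemma sumD (M : ℕ) :
    (∑ i : Fin M, (rowRemoved M i)ᵀ * rowRemoved M i)
      = ((M : ℂ) - 1) • (1 : Matrix (Fin M) (Fin M) ℂ) := by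
  ext k k'
  simp only [Matrix.sum_apply, RtR, Matrix.of_apply, Matrix.smul_apply, Matrix.one_apply,
    smul_eq_mul]
  by_cases hkk : k = k'
  · subst hkk
    have key : ∀ i : Fin M, (if k = k ∧ k ≠ i then (1 : ℂ) else 0)
        = 1 - (if i = k then 1 else 0) := by
      intro i
      by_cases h : i = k
      · subst h
        simp
      · rw [if_pos ⟨rfl, Ne.symm h⟩, if_neg h]
        ring
    rw [Finset.sum_congr rfl (fun i _ => key i)]
    rw [Finset.sum_sub_distrib, Finset.sum_const, Finset.sum_ite_eq' Finset.univ k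
      (fun _ => (1 : ℂ))]
    simp [Finset.card_univ]
  · simp [hkk]

lemma sumDPD (M : ℕ) (q : Fin M → ℂ) (hqu : ∀ j, q j * star (q j) = 1) :
    (∑ i : Fin M, ((rowRemoved M i)ᵀ * rowRemoved M i)
        * (Matrix.of fun l k : Fin M => q l * star (q k))
        * ((rowRemoved M i)ᵀ * rowRemoved M i))
      = (1 : Matrix (Fin M) (Fin M) ℂ)
        + ((M : ℂ) - 2) • (Matrix.of fun l k : Fin M => q l * star (q k)) := by
  have hDPD : ∀ i : Fin M,
      ((rowRemoved M i)ᵀ * rowRemoved M i) * (Matrix.of fun l k : Fin M => q l * star (q k))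
          * ((rowRemoved M i)ᵀ * rowRemoved M i)
        = Matrix.of fun l k : Fin M => if l ≠ i ∧ k ≠ i then q l * star (q k) else 0 := by
    intro i
    rw [RtR, Dmul, mulD]
    ext l k
    simp only [Matrix.of_apply]
    split_ifs <;> first | rfl | tauto
  simp_rw [hDPD]
  ext l k
  simp only [Matrix.sum_apply, Matrix.of_apply, Matrix.add_apply, Matrix.smul_apply,
    Matrix.one_apply, smul_eq_mul]
  by_cases hlk : l = k
  · subst hlk
    have hc := hqu l
    have key : ∀ i : Fin M, (if l ≠ i ∧ l ≠ i then q l * star (q l) else 0)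
        = q l * star (q l) - (if i = l then q l * star (q l) else 0) := by
      intro i
      by_cases h : i = l
      · subst h
        simp
      · rw [if_pos ⟨Ne.symm h, Ne.symm h⟩, if_neg h]
        ring
    rw [Finset.sum_congr rfl (fun i _ => key i)]
    rw [Finset.sum_sub_distrib, Finset.sum_const, Finset.sum_ite_eq' Finset.univ l
      (fun _ => q l * star (q l))]
    have hc' : q l * (starRingEnd ℂ) (q l) = 1 := hqu l
    simp only [Finset.mem_univ, if_pos, Finset.card_univ, Fintype.card_fin, nsmul_eq_mul, if_true]
    linear_combination hc
  · have key : ∀ i : Fin M, (if l ≠ i ∧ k ≠ i then q l * star (q k) else 0)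
        = q l * star (q k) - (if i = l then q l * star (q k) else 0)
          - (if i = k then q l * star (q k) else 0) := by
      intro i
      by_cases h1 : i = l
      · subst h1
        rw [if_neg (by tauto), if_pos rfl, if_neg (by tauto)]
        ring
      · by_cases h2 : i = k
        · subst h2
          rw [if_neg (by tauto), if_neg h1, if_pos rfl]
          ring
        · rw [if_pos ⟨Ne.symm h1, Ne.symm h2⟩, if_neg h1, if_neg h2]
          ring
    rw [Finset.sum_congr rfl (fun i _ => key i)]
    rw [Finset.sum_sub_distrib, Finset.sum_sub_distrib, Finset.sum_const,
      Finset.sum_ite_eq' Finset.univ l (fun _ => q l * star (q k)),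
      Finset.sum_ite_eq' Finset.univ k (fun _ => q l * star (q k))]
    simp only [Finset.mem_univ, if_true, Finset.card_univ, Fintype.card_fin, nsmul_eq_mul]
    rw [if_neg hlk]
    ring

lemma PDP (M : ℕ) (i : Fin M) (q : Fin M → ℂ) (hqu : ∀ j, q j * star (q j) = 1) :
    (Matrix.of fun l k : Fin M => q l * star (q k)) * ((rowRemoved M i)ᵀ * rowRemoved M i)
        * (Matrix.of fun l k : Fin M => q l * star (q k))
      = ((M : ℂ) - 1) • (Matrix.of fun l k : Fin M => q l * star (q k)) := by
  rw [RtR, mulD]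
  ext l k
  rw [Matrix.mul_apply]
  simp only [Matrix.of_apply, Matrix.smul_apply, smul_eq_mul]
  have key : ∀ a : Fin M, (if a ≠ i then q l * star (q a) else 0) * (q a * star (q k))
      = q l * star (q k) - (if a = i then q l * star (q k) else 0) := by
    intro a
    by_cases h : a = i
    · subst h
      simp
    · rw [if_pos h, if_neg h]
      linear_combination (q l * star (q k)) * hqu a
  rw [Finset.sum_congr rfl (fun a _ => key a)]
  rw [Finset.sum_sub_distrib, Finset.sum_const,
    Finset.sum_ite_eq' Finset.univ i (fun _ => q l * star (q k))]
  simp [Finset.card_univ]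
  ring

lemma key_inv {n : Type*} [Fintype n] [DecidableEq n] (X : Matrix n n ℂ) (c d e γ : ℂ)
    (hX : X * X = e • X) (hc : c ≠ 0)
    (hγ : c * γ - d * c⁻¹ - d * γ * e = 0) :
    (c • (1 : Matrix n n ℂ) - d • X) * (c⁻¹ • 1 + γ • X) = 1 := by
  have h1 : (c • (1 : Matrix n n ℂ) - d • X) * (c⁻¹ • 1 + γ • X)
      = (c * c⁻¹) • 1 + (c * γ - d * c⁻¹ - d * (γ * e)) • X := by
    simp only [Matrix.mul_add, Matrix.sub_mul, Matrix.smul_mul, Matrix.mul_smul,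
      Matrix.one_mul, Matrix.mul_one, smul_smul, hX]
    match_scalars <;> ring
  rw [h1, mul_inv_cancel₀ hc]
  have h2 : c * γ - d * c⁻¹ - d * (γ * e) = 0 := by linear_combination hγ
  rw [h2]
  simp

lemma key_sq {n : Type*} [Fintype n] [DecidableEq n] (X : Matrix n n ℂ) (c γ e : ℂ)
    (hX : X * X = e • X) :
    (c⁻¹ • (1 : Matrix n n ℂ) + γ • X) * (c⁻¹ • 1 + γ • X)
      = (c⁻¹ * c⁻¹) • 1 + (c⁻¹ * γ + γ * c⁻¹ + γ * γ * e) • X := by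
  simp only [Matrix.mul_add, Matrix.add_mul, Matrix.smul_mul, Matrix.mul_smul,
    Matrix.one_mul, Matrix.mul_one, smul_smul, hX]
  match_scalars <;> ring

lemma sum_kron {ι : Type*} {M N : ℕ} (s : Finset ι) (A : ι → Matrix (Fin M) (Fin M) ℂ)
    (B : Matrix (Fin N) (Fin N) ℂ) :
    (∑ i ∈ s, A i) ⊗ₖ B = ∑ i ∈ s, (A i ⊗ₖ B) := by
  ext ⟨a, b⟩ ⟨a', b'⟩
  simp [Matrix.sum_apply, Finset.sum_mul]


/-- With `F = √α·Q̄_m` (`Q̄_m` the `NM`-point DFT matrix with the `N`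
columns indexed `m + nM` removed), one has
`Σ_{i=1}^{M} S̄_(i)ᵀ (I + S̄_(i) F Fᴴ S̄_(i)ᵀ)⁻² S̄_(i)
  = (1/(1+NMα)²)·[((M−1+β)·I_M + β(M−2)·q_m q_mᴴ) ⊗ I_N]`,
where `β = (2Nα(1+Nα) + N²α²(M−1))/(1+Nα)²`. -/
theorem stmt_4 (M N : ℕ) (hM : 2 ≤ M) (hN : 1 ≤ N) (m : ℕ) (hm : m ≤ M - 1)
    (α : ℝ) (hα : 0 < α)
    (Qbar : Matrix (Fin M × Fin N)
      {k : Fin (N * M) // ∀ n : Fin N, (k : ℕ) ≠ m + (n : ℕ) * M} ℂ)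
    (hQbar : ∀ (j : Fin M) (b : Fin N)
        (k : {k : Fin (N * M) // ∀ n : Fin N, (k : ℕ) ≠ m + (n : ℕ) * M}),
      Qbar (j, b) k =
        Complex.exp (-(2 * (Real.pi : ℂ) * Complex.I *
          ((((j : ℕ) * N + (b : ℕ)) * ((k : Fin (N * M)) : ℕ) : ℕ) : ℂ)) / ((N * M : ℕ) : ℂ)))
    (q : Fin M → ℂ)
    (hq : ∀ j : Fin M,
      q j = Complex.exp (-(2 * (Real.pi : ℂ) * Complex.I * (((j : ℕ) * m : ℕ) : ℂ)) / (M : ℂ)))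
    (F : Matrix (Fin M × Fin N)
      {k : Fin (N * M) // ∀ n : Fin N, (k : ℕ) ≠ m + (n : ℕ) * M} ℂ)
    (hF : F = ((Real.sqrt α : ℝ) : ℂ) • Qbar)
    (β : ℝ)
    (hβ : β = (2 * N * α * (1 + N * α) + (N : ℝ) ^ 2 * α ^ 2 * ((M : ℝ) - 1)) /
      (1 + (N : ℝ) * α) ^ 2) :
    (∑ i : Fin M,
        (sBar M N i)ᵀ *
          (((1 : Matrix (Fin (M - 1) × Fin N) (Fin (M - 1) × Fin N) ℂ) +
              sBar M N i * F * Fᴴ * (sBar M N i)ᵀ)⁻¹ *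
            ((1 : Matrix (Fin (M - 1) × Fin N) (Fin (M - 1) × Fin N) ℂ) +
              sBar M N i * F * Fᴴ * (sBar M N i)ᵀ)⁻¹) * sBar M N i) =
      ((((1 + (N : ℝ) * (M : ℝ) * α) ^ 2)⁻¹ : ℝ) : ℂ) •
        (((((M : ℝ) - 1 + β : ℝ) : ℂ) • (1 : Matrix (Fin M) (Fin M) ℂ) +
            ((β * ((M : ℝ) - 2) : ℝ) : ℂ) •
              (Matrix.of fun l k : Fin M => q l * star (q k))) ⊗ₖ
          (1 : Matrix (Fin N) (Fin N) ℂ)) := by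
  have hM0 : 0 < M := by omega
  have hN0 : 0 < N := by omega
  have hqu : ∀ j, q j * star (q j) = 1 := fun j => q_unit M m q hq j
  have hQQ := QbarQbarH M N hM hN m hm Qbar hQbar q hq
  set P : Matrix (Fin M) (Fin M) ℂ := Matrix.of fun l k : Fin M => q l * star (q k) with hPdef
  set cR : ℝ := 1 + (N : ℝ) * (M : ℝ) * α with hcR
  set γR : ℝ := ((N : ℝ) * α) / (cR * (1 + (N : ℝ) * α)) with hγR
  have hcpos : 0 < cR := by rw [hcR]; positivity
  have hc0 : cR ≠ 0 := hcpos.ne'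
  have he0 : (1 : ℝ) + (N : ℝ) * α ≠ 0 := by positivity
  have hcC0 : ((cR : ℝ) : ℂ) ≠ 0 := Complex.ofReal_ne_zero.mpr hc0
  -- real scalar identities
  have hγ_eq : cR * γR - (N : ℝ) * α * cR⁻¹ - (N : ℝ) * α * γR * ((M : ℝ) - 1) = 0 := by
    rw [hγR, hcR]
    field_simp
    ring
  have hδ_eq : cR⁻¹ * γR + γR * cR⁻¹ + γR * γR * ((M : ℝ) - 1) = (cR ^ 2)⁻¹ * β := by
    rw [hβ, hγR, hcR]
    field_simp
    ring
  have hcsq : cR⁻¹ * cR⁻¹ = (cR ^ 2)⁻¹ := by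
    rw [sq, mul_inv]
  -- complex scalar identities
  have hγC : ((cR : ℝ) : ℂ) * ((γR : ℝ) : ℂ) - ((N : ℝ) * α : ℝ) * (((cR : ℝ) : ℂ))⁻¹
      - ((N : ℝ) * α : ℝ) * ((γR : ℝ) : ℂ) * ((M : ℂ) - 1) = 0 := by
    have h := congrArg (fun x : ℝ => (x : ℂ)) hγ_eq
    push_cast at h ⊢
    linear_combination h
  have hδC : (((cR : ℝ) : ℂ))⁻¹ * ((γR : ℝ) : ℂ) + ((γR : ℝ) : ℂ) * (((cR : ℝ) : ℂ))⁻¹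
      + ((γR : ℝ) : ℂ) * ((γR : ℝ) : ℂ) * ((M : ℂ) - 1) = (((cR ^ 2)⁻¹ : ℝ) : ℂ) * (β : ℂ) := by
    have h := congrArg (fun x : ℝ => (x : ℂ)) hδ_eq
    push_cast at h ⊢
    linear_combination h
  have hcsqC : (((cR : ℝ) : ℂ))⁻¹ * (((cR : ℝ) : ℂ))⁻¹ = (((cR ^ 2)⁻¹ : ℝ) : ℂ) := by
    have h := congrArg (fun x : ℝ => (x : ℂ)) hcsq
    push_cast at h ⊢
    linear_combination h
  -- F * Fᴴ
  have hs' : ((Real.sqrt α : ℝ) : ℂ) * star ((Real.sqrt α : ℝ) : ℂ) = (α : ℂ) := by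
    rw [Complex.star_def, Complex.conj_ofReal, ← Complex.ofReal_mul, Real.mul_self_sqrt hα.le]
  have hFF : F * Fᴴ = ((α : ℂ) * ((N * M : ℕ) : ℂ)) • 1 - ((α : ℂ) * (N : ℂ)) • (P ⊗ₖ 1) := by
    rw [hF, Matrix.conjTranspose_smul, Matrix.smul_mul, Matrix.mul_smul, smul_smul, hs', hQQ,
      smul_sub, smul_smul, smul_smul]
  have hSt : ∀ i : Fin M, (sBar M N i)ᵀ
      = (rowRemoved M i)ᵀ ⊗ₖ (1 : Matrix (Fin N) (Fin N) ℂ) := by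
    intro i
    rw [sBar, ← Matrix.kroneckerMap_transpose, Matrix.transpose_one]
  have key : ∀ i : Fin M,
      (sBar M N i)ᵀ *
          (((1 : Matrix (Fin (M - 1) × Fin N) (Fin (M - 1) × Fin N) ℂ) +
              sBar M N i * F * Fᴴ * (sBar M N i)ᵀ)⁻¹ *
            ((1 : Matrix (Fin (M - 1) × Fin N) (Fin (M - 1) × Fin N) ℂ) +
              sBar M N i * F * Fᴴ * (sBar M N i)ᵀ)⁻¹) * sBar M N i
        = (((cR ^ 2)⁻¹ : ℝ) : ℂ) • (((rowRemoved M i)ᵀ * rowRemoved M i) ⊗ₖ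
              (1 : Matrix (Fin N) (Fin N) ℂ))
          + ((((cR ^ 2)⁻¹ : ℝ) : ℂ) * (β : ℂ)) •
              ((((rowRemoved M i)ᵀ * rowRemoved M i) * P * ((rowRemoved M i)ᵀ * rowRemoved M i))
                ⊗ₖ (1 : Matrix (Fin N) (Fin N) ℂ)) := by
    intro i
    have hPiPi : (rowRemoved M i * P * (rowRemoved M i)ᵀ) * (rowRemoved M i * P * (rowRemoved M i)ᵀ)
        = ((M : ℂ) - 1) • (rowRemoved M i * P * (rowRemoved M i)ᵀ) := by
      have h1 : (rowRemoved M i * P * (rowRemoved M i)ᵀ) * (rowRemoved M i * P * (rowRemoved M i)ᵀ)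
          = rowRemoved M i * (P * ((rowRemoved M i)ᵀ * rowRemoved M i) * P) * (rowRemoved M i)ᵀ := by
        simp only [Matrix.mul_assoc]
      rw [h1, PDP M i q hqu, Matrix.mul_smul, Matrix.smul_mul]
    set X : Matrix (Fin (M - 1) × Fin N) (Fin (M - 1) × Fin N) ℂ :=
      (rowRemoved M i * P * (rowRemoved M i)ᵀ) ⊗ₖ (1 : Matrix (Fin N) (Fin N) ℂ) with hXdef
    have hXX : X * X = ((M : ℂ) - 1) • X := by
      rw [hXdef, ← Matrix.mul_kronecker_mul, hPiPi, Matrix.one_mul, Matrix.smul_kronecker]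
    have hSS : sBar M N i * (sBar M N i)ᵀ = 1 := by
      rw [hSt i, sBar, ← Matrix.mul_kronecker_mul, RRt M i, Matrix.one_mul,
        Matrix.one_kronecker_one]
    have hSPS : sBar M N i * (P ⊗ₖ (1 : Matrix (Fin N) (Fin N) ℂ)) * (sBar M N i)ᵀ = X := by
      rw [hSt i, sBar, ← Matrix.mul_kronecker_mul, ← Matrix.mul_kronecker_mul,
        Matrix.one_mul, Matrix.one_mul, hXdef]
    have hA : (1 : Matrix (Fin (M - 1) × Fin N) (Fin (M - 1) × Fin N) ℂ) +
        sBar M N i * F * Fᴴ * (sBar M N i)ᵀ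
        = ((cR : ℝ) : ℂ) • 1 - (((N : ℝ) * α : ℝ) : ℂ) • X := by
      have h2 : sBar M N i * F * Fᴴ * (sBar M N i)ᵀ
          = sBar M N i * (F * Fᴴ) * (sBar M N i)ᵀ := by
        rw [Matrix.mul_assoc (sBar M N i) F Fᴴ]
      rw [h2, hFF, Matrix.mul_sub, Matrix.sub_mul]
      simp only [Matrix.mul_smul, Matrix.smul_mul, Matrix.mul_one]
      rw [hSS, hSPS]
      match_scalars <;> (try simp only [hcR]) <;> push_cast <;> ring
    have hAinv : ((1 : Matrix (Fin (M - 1) × Fin N) (Fin (M - 1) × Fin N) ℂ) +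
        sBar M N i * F * Fᴴ * (sBar M N i)ᵀ)⁻¹
        = (((cR : ℝ) : ℂ))⁻¹ • 1 + ((γR : ℝ) : ℂ) • X := by
      rw [hA]
      exact Matrix.inv_eq_right_inv
        (key_inv X ((cR : ℝ) : ℂ) (((N : ℝ) * α : ℝ) : ℂ) ((M : ℂ) - 1) ((γR : ℝ) : ℂ)
          hXX hcC0 hγC)
    rw [hAinv, key_sq X ((cR : ℝ) : ℂ) ((γR : ℝ) : ℂ) ((M : ℂ) - 1) hXX]
    rw [hcsqC, hδC]
    have hStS : (sBar M N i)ᵀ * sBar M N i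
        = ((rowRemoved M i)ᵀ * rowRemoved M i) ⊗ₖ (1 : Matrix (Fin N) (Fin N) ℂ) := by
      rw [hSt i, sBar, ← Matrix.mul_kronecker_mul, Matrix.one_mul]
    have hStXS : (sBar M N i)ᵀ * X * sBar M N i
        = (((rowRemoved M i)ᵀ * rowRemoved M i) * P * ((rowRemoved M i)ᵀ * rowRemoved M i))
            ⊗ₖ (1 : Matrix (Fin N) (Fin N) ℂ) := by
      rw [hXdef, hSt i, sBar, ← Matrix.mul_kronecker_mul, ← Matrix.mul_kronecker_mul,
        Matrix.one_mul, Matrix.one_mul]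
      congr 1
      simp only [Matrix.mul_assoc]
    rw [Matrix.mul_add, Matrix.add_mul]
    simp only [Matrix.mul_smul, Matrix.smul_mul, Matrix.mul_one]
    rw [hStS, hStXS]
  rw [Finset.sum_congr rfl (fun i _ => key i)]
  rw [Finset.sum_add_distrib, ← Finset.smul_sum, ← Finset.smul_sum, ← sum_kron, ← sum_kron]
  rw [sumD M, sumDPD M q hqu]
  rw [Matrix.smul_kronecker, Matrix.add_kronecker, Matrix.smul_kronecker,
    Matrix.add_kronecker, Matrix.smul_kronecker, Matrix.smul_kronecker,
    Matrix.one_kronecker_one]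
  match_scalars <;> push_cast <;> ring
end

section
/- Let σ_1, σ_2, λ_1, λ_2, c_1, c_2 > 0 be real numbers. Define θ_1 = (σ_2² + λ_1λ_2 c_1)², θ_2 = (σ_1² + λ_1λ_2 c_2)², and ϑ = (σ_1²σ_2² + σ_1²λ_1λ_2 c_1 + σ_2²λ_1λ_2 c_2)². Then the symmetric 2×2 matrix H with entries H_{11} = λ_1²λ_2²(ϑ − σ_1⁴θ_1)/(θ_1 ϑ), H_{22} = λ_1²λ_2²(ϑ − σ_2⁴θ_2)/(θ_2 ϑ), and H_{12} = H_{21} = −σ_1²σ_2²λ_1²λ_2²/ϑ is positive semidefinite if and only if c_1 c_2 ≥ σ_1²σ_2²/(2 λ_1² λ_2²). -/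
open Matrix

set_option maxHeartbeats 1000000 in
theorem psd_aux (p q a c1 c2 : ℝ) (hp : 0 < p) (hq0 : 0 < q) (ha : 0 < a)
    (h1 : 0 < c1) (h2 : 0 < c2) :
    (∀ y z : ℝ, 0 ≤
      y * (a ^ 2 * ((p * q + p * a * c1 + q * a * c2) ^ 2 - p ^ 2 * (q + a * c1) ^ 2) /
              ((q + a * c1) ^ 2 * (p * q + p * a * c1 + q * a * c2) ^ 2) * y +
            -(p * q * a ^ 2) / (p * q + p * a * c1 + q * a * c2) ^ 2 * z) +
        z * (-(p * q * a ^ 2) / (p * q + p * a * c1 + q * a * c2) ^ 2 * y +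
            a ^ 2 * ((p * q + p * a * c1 + q * a * c2) ^ 2 - q ^ 2 * (p + a * c2) ^ 2) /
              ((p + a * c2) ^ 2 * (p * q + p * a * c1 + q * a * c2) ^ 2) * z))
      ↔ 0 ≤ 2 * a ^ 2 * (c1 * c2) - p * q := by
  have hu : (0:ℝ) < (q + a * c1) ^ 2 := by positivity
  have hv : (0:ℝ) < (p + a * c2) ^ 2 := by positivity
  have hS : (0:ℝ) < (p * q + p * a * c1 + q * a * c2) ^ 2 := by positivity
  have hm : (0:ℝ) < (p * q + p * a * c1 + q * a * c2) ^ 2 - p ^ 2 * (q + a * c1) ^ 2 := by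
    have hfac : (p * q + p * a * c1 + q * a * c2) ^ 2 - p ^ 2 * (q + a * c1) ^ 2
        = q * (a * c2) * ((p * q + p * a * c1 + q * a * c2) + p * (q + a * c1)) := by ring
    rw [hfac]; positivity
  have hden : (0:ℝ) < (q + a * c1) ^ 2 * (p + a * c2) ^ 2
      * (p * q + p * a * c1 + q * a * c2) ^ 2 := by positivity
  constructor
  · intro hall
    have hq2 := hall (p * q * (q + a * c1) ^ 2)
      ((p * q + p * a * c1 + q * a * c2) ^ 2 - p ^ 2 * (q + a * c1) ^ 2)
    have e : (p * q * (q + a * c1) ^ 2 *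
          (a ^ 2 * ((p * q + p * a * c1 + q * a * c2) ^ 2 - p ^ 2 * (q + a * c1) ^ 2) /
              ((q + a * c1) ^ 2 * (p * q + p * a * c1 + q * a * c2) ^ 2) *
              (p * q * (q + a * c1) ^ 2) +
            -(p * q * a ^ 2) / (p * q + p * a * c1 + q * a * c2) ^ 2 *
              ((p * q + p * a * c1 + q * a * c2) ^ 2 - p ^ 2 * (q + a * c1) ^ 2)) +
        ((p * q + p * a * c1 + q * a * c2) ^ 2 - p ^ 2 * (q + a * c1) ^ 2) *
          (-(p * q * a ^ 2) / (p * q + p * a * c1 + q * a * c2) ^ 2 *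
              (p * q * (q + a * c1) ^ 2) +
            a ^ 2 * ((p * q + p * a * c1 + q * a * c2) ^ 2 - q ^ 2 * (p + a * c2) ^ 2) /
              ((p + a * c2) ^ 2 * (p * q + p * a * c1 + q * a * c2) ^ 2) *
              ((p * q + p * a * c1 + q * a * c2) ^ 2 - p ^ 2 * (q + a * c1) ^ 2)))
        * ((q + a * c1) ^ 2 * (p + a * c2) ^ 2 * (p * q + p * a * c1 + q * a * c2) ^ 2)
        = (a ^ 2 * ((p * q + p * a * c1 + q * a * c2) ^ 2 - p ^ 2 * (q + a * c1) ^ 2)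
            * (q + a * c1) ^ 2 * (p * q) * (p * q + p * a * c1 + q * a * c2) ^ 2)
          * (2 * a ^ 2 * (c1 * c2) - p * q) := by
      field_simp
      ring
    have hC : (0:ℝ) < a ^ 2 * ((p * q + p * a * c1 + q * a * c2) ^ 2 - p ^ 2 * (q + a * c1) ^ 2)
        * (q + a * c1) ^ 2 * (p * q) * (p * q + p * a * c1 + q * a * c2) ^ 2 :=
      mul_pos (mul_pos (mul_pos (mul_pos (by positivity) hm) hu) (by positivity)) hS
    have h3 := mul_nonneg hq2 hden.le
    rw [e] at h3
    exact (mul_nonneg_iff_of_pos_left hC).mp h3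
  · intro hG y z
    have hK : (0:ℝ) ≤ p * q * (p * q + p * a * c1 + q * a * c2) ^ 2
        * (2 * a ^ 2 * (c1 * c2) - p * q) * ((q + a * c1) * z) ^ 2 :=
      mul_nonneg (mul_nonneg (by positivity) hG) (sq_nonneg _)
    have h4 : (0:ℝ) ≤ ((p * q + p * a * c1 + q * a * c2) ^ 2 - p ^ 2 * (q + a * c1) ^ 2) *
        ((((p * q + p * a * c1 + q * a * c2) ^ 2 - p ^ 2 * (q + a * c1) ^ 2)
            * ((p + a * c2) * y) ^ 2
          - 2 * (p * q * ((q + a * c1) * (p + a * c2))) * ((p + a * c2) * y) * ((q + a * c1) * z)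
          + ((p * q + p * a * c1 + q * a * c2) ^ 2 - q ^ 2 * (p + a * c2) ^ 2)
            * ((q + a * c1) * z) ^ 2)) := by
      have hid : ((p * q + p * a * c1 + q * a * c2) ^ 2 - p ^ 2 * (q + a * c1) ^ 2) *
          ((((p * q + p * a * c1 + q * a * c2) ^ 2 - p ^ 2 * (q + a * c1) ^ 2)
              * ((p + a * c2) * y) ^ 2
            - 2 * (p * q * ((q + a * c1) * (p + a * c2))) * ((p + a * c2) * y) * ((q + a * c1) * z)
            + ((p * q + p * a * c1 + q * a * c2) ^ 2 - q ^ 2 * (p + a * c2) ^ 2)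
              * ((q + a * c1) * z) ^ 2))
          = (((p * q + p * a * c1 + q * a * c2) ^ 2 - p ^ 2 * (q + a * c1) ^ 2)
              * ((p + a * c2) * y)
              - p * q * ((q + a * c1) * (p + a * c2)) * ((q + a * c1) * z)) ^ 2
            + p * q * (p * q + p * a * c1 + q * a * c2) ^ 2
              * (2 * a ^ 2 * (c1 * c2) - p * q) * ((q + a * c1) * z) ^ 2 := by
        ring
      rw [hid]
      exact add_nonneg (sq_nonneg _) hK
    have hM := (mul_nonneg_iff_of_pos_left hm).mp h4
    have hM2 : (0:ℝ) ≤ a ^ 2 * (((p * q + p * a * c1 + q * a * c2) ^ 2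
            - p ^ 2 * (q + a * c1) ^ 2) * ((p + a * c2) * y) ^ 2
          - 2 * (p * q * ((q + a * c1) * (p + a * c2))) * ((p + a * c2) * y) * ((q + a * c1) * z)
          + ((p * q + p * a * c1 + q * a * c2) ^ 2 - q ^ 2 * (p + a * c2) ^ 2)
            * ((q + a * c1) * z) ^ 2) :=
      mul_nonneg (by positivity) hM
    have heq : (y * (a ^ 2 * ((p * q + p * a * c1 + q * a * c2) ^ 2 - p ^ 2 * (q + a * c1) ^ 2) /
              ((q + a * c1) ^ 2 * (p * q + p * a * c1 + q * a * c2) ^ 2) * y +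
            -(p * q * a ^ 2) / (p * q + p * a * c1 + q * a * c2) ^ 2 * z) +
        z * (-(p * q * a ^ 2) / (p * q + p * a * c1 + q * a * c2) ^ 2 * y +
            a ^ 2 * ((p * q + p * a * c1 + q * a * c2) ^ 2 - q ^ 2 * (p + a * c2) ^ 2) /
              ((p + a * c2) ^ 2 * (p * q + p * a * c1 + q * a * c2) ^ 2) * z))
        * ((q + a * c1) ^ 2 * (p + a * c2) ^ 2 * (p * q + p * a * c1 + q * a * c2) ^ 2)
        = a ^ 2 * (((p * q + p * a * c1 + q * a * c2) ^ 2 - p ^ 2 * (q + a * c1) ^ 2)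
            * ((p + a * c2) * y) ^ 2
          - 2 * (p * q * ((q + a * c1) * (p + a * c2))) * ((p + a * c2) * y) * ((q + a * c1) * z)
          + ((p * q + p * a * c1 + q * a * c2) ^ 2 - q ^ 2 * (p + a * c2) ^ 2)
            * ((q + a * c1) * z) ^ 2) := by
      field_simp
      ring
    rw [← heq] at hM2
    exact (mul_nonneg_iff_of_pos_right hden).mp hM2


set_option maxHeartbeats 1000000 in
/-- positivity of the Hessian of `−f_{l,k}`.  With
`θ_1 = (σ_2² + λ_1λ_2 c_1)²`, `θ_2 = (σ_1² + λ_1λ_2 c_2)²` and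
`ϑ = (σ_1²σ_2² + σ_1²λ_1λ_2 c_1 + σ_2²λ_1λ_2 c_2)²`, the symmetric `2×2` matrix `H`
with `H_11 = λ_1²λ_2²(ϑ − σ_1⁴θ_1)/(θ_1ϑ)`, `H_22 = λ_1²λ_2²(ϑ − σ_2⁴θ_2)/(θ_2ϑ)` and
`H_12 = H_21 = −σ_1²σ_2²λ_1²λ_2²/ϑ` is positive semidefinite iff
`c_1 c_2 ≥ σ_1²σ_2²/(2λ_1²λ_2²)`. -/
theorem stmt_9 (σ1 σ2 l1 l2 c1 c2 : ℝ)
    (hσ1 : 0 < σ1) (hσ2 : 0 < σ2) (hl1 : 0 < l1) (hl2 : 0 < l2)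
    (hc1 : 0 < c1) (hc2 : 0 < c2)
    (θ1 θ2 ϑ : ℝ)
    (hθ1 : θ1 = (σ2 ^ 2 + l1 * l2 * c1) ^ 2)
    (hθ2 : θ2 = (σ1 ^ 2 + l1 * l2 * c2) ^ 2)
    (hϑ : ϑ = (σ1 ^ 2 * σ2 ^ 2 + σ1 ^ 2 * l1 * l2 * c1 + σ2 ^ 2 * l1 * l2 * c2) ^ 2)
    (H : Matrix (Fin 2) (Fin 2) ℝ)
    (hH : H = !![l1 ^ 2 * l2 ^ 2 * (ϑ - σ1 ^ 4 * θ1) / (θ1 * ϑ),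
                 -(σ1 ^ 2 * σ2 ^ 2 * l1 ^ 2 * l2 ^ 2) / ϑ;
                 -(σ1 ^ 2 * σ2 ^ 2 * l1 ^ 2 * l2 ^ 2) / ϑ,
                 l1 ^ 2 * l2 ^ 2 * (ϑ - σ2 ^ 4 * θ2) / (θ2 * ϑ)]) :
    H.PosSemidef ↔ σ1 ^ 2 * σ2 ^ 2 / (2 * l1 ^ 2 * l2 ^ 2) ≤ c1 * c2 := by
  have haux := psd_aux (σ1 ^ 2) (σ2 ^ 2) (l1 * l2) c1 c2 (by positivity) (by positivity)
    (by positivity) hc1 hc2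
  subst hθ1 hθ2 hϑ hH
  constructor
  · intro hpsd
    have hall : ∀ y z : ℝ, 0 ≤
        y * ((l1 * l2) ^ 2 * ((σ1 ^ 2 * σ2 ^ 2 + σ1 ^ 2 * (l1 * l2) * c1 + σ2 ^ 2 * (l1 * l2) * c2) ^ 2 - (σ1 ^ 2) ^ 2 * (σ2 ^ 2 + (l1 * l2) * c1) ^ 2) /
                ((σ2 ^ 2 + (l1 * l2) * c1) ^ 2 * (σ1 ^ 2 * σ2 ^ 2 + σ1 ^ 2 * (l1 * l2) * c1 + σ2 ^ 2 * (l1 * l2) * c2) ^ 2) * y +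
              -(σ1 ^ 2 * σ2 ^ 2 * (l1 * l2) ^ 2) / (σ1 ^ 2 * σ2 ^ 2 + σ1 ^ 2 * (l1 * l2) * c1 + σ2 ^ 2 * (l1 * l2) * c2) ^ 2 * z) +
          z * (-(σ1 ^ 2 * σ2 ^ 2 * (l1 * l2) ^ 2) / (σ1 ^ 2 * σ2 ^ 2 + σ1 ^ 2 * (l1 * l2) * c1 + σ2 ^ 2 * (l1 * l2) * c2) ^ 2 * y +
              (l1 * l2) ^ 2 * ((σ1 ^ 2 * σ2 ^ 2 + σ1 ^ 2 * (l1 * l2) * c1 + σ2 ^ 2 * (l1 * l2) * c2) ^ 2 - (σ2 ^ 2) ^ 2 * (σ1 ^ 2 + (l1 * l2) * c2) ^ 2) /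
                ((σ1 ^ 2 + (l1 * l2) * c2) ^ 2 * (σ1 ^ 2 * σ2 ^ 2 + σ1 ^ 2 * (l1 * l2) * c1 + σ2 ^ 2 * (l1 * l2) * c2) ^ 2) * z) := by
      intro y z
      have hq := hpsd.dotProduct_mulVec_nonneg ![y, z]
      simp [dotProduct, Matrix.mulVec, Fin.sum_univ_two] at hq
      have hconv :
        y * (l1 ^ 2 * l2 ^ 2 * ((σ1 ^ 2 * σ2 ^ 2 + σ1 ^ 2 * l1 * l2 * c1 + σ2 ^ 2 * l1 * l2 * c2) ^ 2 - σ1 ^ 4 * (σ2 ^ 2 + l1 * l2 * c1) ^ 2) /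
                ((σ2 ^ 2 + l1 * l2 * c1) ^ 2 * (σ1 ^ 2 * σ2 ^ 2 + σ1 ^ 2 * l1 * l2 * c1 + σ2 ^ 2 * l1 * l2 * c2) ^ 2) * y +
              -(σ1 ^ 2 * σ2 ^ 2 * l1 ^ 2 * l2 ^ 2) / (σ1 ^ 2 * σ2 ^ 2 + σ1 ^ 2 * l1 * l2 * c1 + σ2 ^ 2 * l1 * l2 * c2) ^ 2 * z) +
          z * (-(σ1 ^ 2 * σ2 ^ 2 * l1 ^ 2 * l2 ^ 2) / (σ1 ^ 2 * σ2 ^ 2 + σ1 ^ 2 * l1 * l2 * c1 + σ2 ^ 2 * l1 * l2 * c2) ^ 2 * y +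
              l1 ^ 2 * l2 ^ 2 * ((σ1 ^ 2 * σ2 ^ 2 + σ1 ^ 2 * l1 * l2 * c1 + σ2 ^ 2 * l1 * l2 * c2) ^ 2 - σ2 ^ 4 * (σ1 ^ 2 + l1 * l2 * c2) ^ 2) /
                ((σ1 ^ 2 + l1 * l2 * c2) ^ 2 * (σ1 ^ 2 * σ2 ^ 2 + σ1 ^ 2 * l1 * l2 * c1 + σ2 ^ 2 * l1 * l2 * c2) ^ 2) * z)
        = y * ((l1 * l2) ^ 2 * ((σ1 ^ 2 * σ2 ^ 2 + σ1 ^ 2 * (l1 * l2) * c1 + σ2 ^ 2 * (l1 * l2) * c2) ^ 2 - (σ1 ^ 2) ^ 2 * (σ2 ^ 2 + (l1 * l2) * c1) ^ 2) /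
                ((σ2 ^ 2 + (l1 * l2) * c1) ^ 2 * (σ1 ^ 2 * σ2 ^ 2 + σ1 ^ 2 * (l1 * l2) * c1 + σ2 ^ 2 * (l1 * l2) * c2) ^ 2) * y +
              -(σ1 ^ 2 * σ2 ^ 2 * (l1 * l2) ^ 2) / (σ1 ^ 2 * σ2 ^ 2 + σ1 ^ 2 * (l1 * l2) * c1 + σ2 ^ 2 * (l1 * l2) * c2) ^ 2 * z) +
          z * (-(σ1 ^ 2 * σ2 ^ 2 * (l1 * l2) ^ 2) / (σ1 ^ 2 * σ2 ^ 2 + σ1 ^ 2 * (l1 * l2) * c1 + σ2 ^ 2 * (l1 * l2) * c2) ^ 2 * y +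
              (l1 * l2) ^ 2 * ((σ1 ^ 2 * σ2 ^ 2 + σ1 ^ 2 * (l1 * l2) * c1 + σ2 ^ 2 * (l1 * l2) * c2) ^ 2 - (σ2 ^ 2) ^ 2 * (σ1 ^ 2 + (l1 * l2) * c2) ^ 2) /
                ((σ1 ^ 2 + (l1 * l2) * c2) ^ 2 * (σ1 ^ 2 * σ2 ^ 2 + σ1 ^ 2 * (l1 * l2) * c1 + σ2 ^ 2 * (l1 * l2) * c2) ^ 2) * z) := by
        ring
      rw [hconv] at hq
      exact hq
    have hG := haux.mp hall
    rw [div_le_iff₀ (by positivity : (0:ℝ) < 2 * l1 ^ 2 * l2 ^ 2)]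
    nlinarith [hG]
  · intro h
    have hG : (0:ℝ) ≤ 2 * (l1 * l2) ^ 2 * (c1 * c2) - σ1 ^ 2 * σ2 ^ 2 := by
      rw [div_le_iff₀ (by positivity : (0:ℝ) < 2 * l1 ^ 2 * l2 ^ 2)] at h
      nlinarith [h]
    refine Matrix.PosSemidef.of_dotProduct_mulVec_nonneg ?_ (fun x => ?_)
    · ext i j
      fin_cases i <;> fin_cases j <;> simp [Matrix.conjTranspose_apply]
    · have h5 := haux.mpr hG (x 0) (x 1)
      simp [dotProduct, Matrix.mulVec, Fin.sum_univ_two]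
      have hconv :
        x 0 * ((l1 * l2) ^ 2 * ((σ1 ^ 2 * σ2 ^ 2 + σ1 ^ 2 * (l1 * l2) * c1 + σ2 ^ 2 * (l1 * l2) * c2) ^ 2 - (σ1 ^ 2) ^ 2 * (σ2 ^ 2 + (l1 * l2) * c1) ^ 2) /
                ((σ2 ^ 2 + (l1 * l2) * c1) ^ 2 * (σ1 ^ 2 * σ2 ^ 2 + σ1 ^ 2 * (l1 * l2) * c1 + σ2 ^ 2 * (l1 * l2) * c2) ^ 2) * x 0 +
              -(σ1 ^ 2 * σ2 ^ 2 * (l1 * l2) ^ 2) / (σ1 ^ 2 * σ2 ^ 2 + σ1 ^ 2 * (l1 * l2) * c1 + σ2 ^ 2 * (l1 * l2) * c2) ^ 2 * x 1) +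
          x 1 * (-(σ1 ^ 2 * σ2 ^ 2 * (l1 * l2) ^ 2) / (σ1 ^ 2 * σ2 ^ 2 + σ1 ^ 2 * (l1 * l2) * c1 + σ2 ^ 2 * (l1 * l2) * c2) ^ 2 * x 0 +
              (l1 * l2) ^ 2 * ((σ1 ^ 2 * σ2 ^ 2 + σ1 ^ 2 * (l1 * l2) * c1 + σ2 ^ 2 * (l1 * l2) * c2) ^ 2 - (σ2 ^ 2) ^ 2 * (σ1 ^ 2 + (l1 * l2) * c2) ^ 2) /
                ((σ1 ^ 2 + (l1 * l2) * c2) ^ 2 * (σ1 ^ 2 * σ2 ^ 2 + σ1 ^ 2 * (l1 * l2) * c1 + σ2 ^ 2 * (l1 * l2) * c2) ^ 2) * x 1)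
        = x 0 * (l1 ^ 2 * l2 ^ 2 * ((σ1 ^ 2 * σ2 ^ 2 + σ1 ^ 2 * l1 * l2 * c1 + σ2 ^ 2 * l1 * l2 * c2) ^ 2 - σ1 ^ 4 * (σ2 ^ 2 + l1 * l2 * c1) ^ 2) /
                ((σ2 ^ 2 + l1 * l2 * c1) ^ 2 * (σ1 ^ 2 * σ2 ^ 2 + σ1 ^ 2 * l1 * l2 * c1 + σ2 ^ 2 * l1 * l2 * c2) ^ 2) * x 0 +
              -(σ1 ^ 2 * σ2 ^ 2 * l1 ^ 2 * l2 ^ 2) / (σ1 ^ 2 * σ2 ^ 2 + σ1 ^ 2 * l1 * l2 * c1 + σ2 ^ 2 * l1 * l2 * c2) ^ 2 * x 1) +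
          x 1 * (-(σ1 ^ 2 * σ2 ^ 2 * l1 ^ 2 * l2 ^ 2) / (σ1 ^ 2 * σ2 ^ 2 + σ1 ^ 2 * l1 * l2 * c1 + σ2 ^ 2 * l1 * l2 * c2) ^ 2 * x 0 +
              l1 ^ 2 * l2 ^ 2 * ((σ1 ^ 2 * σ2 ^ 2 + σ1 ^ 2 * l1 * l2 * c1 + σ2 ^ 2 * l1 * l2 * c2) ^ 2 - σ2 ^ 4 * (σ1 ^ 2 + l1 * l2 * c2) ^ 2) /
                ((σ1 ^ 2 + l1 * l2 * c2) ^ 2 * (σ1 ^ 2 * σ2 ^ 2 + σ1 ^ 2 * l1 * l2 * c1 + σ2 ^ 2 * l1 * l2 * c2) ^ 2) * x 1) := by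
        ring
      rw [hconv] at h5
      exact h5
end

section
/- Let σ_1, σ_2 > 0, let λ̃_{1,1} ≥ λ̃_{1,2} ≥ … ≥ λ̃_{1,N_1} > 0 and λ̃_{2,1},…,λ̃_{2,N_2} > 0, and let c_{2,1},…,c_{2,N_2} > 0. For x > 0 define f'_{l,k}(x) = σ_2² λ̃_{1,l}² λ̃_{2,k}² c_{2,k} / [ (σ_2² + λ̃_{1,l}λ̃_{2,k} x)(σ_1²σ_2² + σ_1²λ̃_{1,l}λ̃_{2,k} x + σ_2²λ̃_{1,l}λ̃_{2,k} c_{2,k}) ]. Suppose c*_{1,1},…,c*_{1,N_1} > 0 and μ > 0 satisfy Σ_{k=1}^{N_2} f'_{l,k}(c*_{1,l}) = μ·ln 2 for every l = 1,…,N_1. Then c*_{1,l} ≥ c*_{1,l+1} for all 1 ≤ l ≤ N_1 − 1; that is, the stationary power allocation is in descending order whenever the channel eigenvalues λ̃_{1,l} are in descending order. -/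
open Matrix

lemma key_term (σ1 σ2 a A lam c x x' : ℝ) (hσ1 : 0 < σ1) (hσ2 : 0 < σ2)
    (ha : 0 < a) (haA : a ≤ A) (hlam : 0 < lam) (hc : 0 < c)
    (hx : 0 < x) (hxx' : x < x') :
    σ2 ^ 2 * a ^ 2 * lam ^ 2 * c /
      ((σ2 ^ 2 + a * lam * x') *
        (σ1 ^ 2 * σ2 ^ 2 + σ1 ^ 2 * a * lam * x' + σ2 ^ 2 * a * lam * c)) <
    σ2 ^ 2 * A ^ 2 * lam ^ 2 * c /
      ((σ2 ^ 2 + A * lam * x) *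
        (σ1 ^ 2 * σ2 ^ 2 + σ1 ^ 2 * A * lam * x + σ2 ^ 2 * A * lam * c)) := by
  have hA : 0 < A := lt_of_lt_of_le ha haA
  have hrw : ∀ b y : ℝ, 0 < b → 0 < y →
      σ2 ^ 2 * b ^ 2 * lam ^ 2 * c /
        ((σ2 ^ 2 + b * lam * y) *
          (σ1 ^ 2 * σ2 ^ 2 + σ1 ^ 2 * b * lam * y + σ2 ^ 2 * b * lam * c)) =
      σ2 ^ 2 * lam ^ 2 * c /
        ((σ2 ^ 2 / b + lam * y) *
          (σ1 ^ 2 * σ2 ^ 2 / b + σ1 ^ 2 * lam * y + σ2 ^ 2 * lam * c)) := by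
    intro b y hb hy
    rw [div_eq_div_iff (by positivity) (by positivity)]
    field_simp
  rw [hrw a x' ha (hx.trans hxx'), hrw A x hA hx]
  apply div_lt_div_of_pos_left (by positivity) (by positivity)
  apply mul_lt_mul''
  · have h1 : σ2 ^ 2 / A ≤ σ2 ^ 2 / a := by gcongr
    have h2 : lam * x < lam * x' := by gcongr
    linarith
  · have h1 : σ1 ^ 2 * σ2 ^ 2 / A ≤ σ1 ^ 2 * σ2 ^ 2 / a := by gcongr
    have h2 : σ1 ^ 2 * lam * x < σ1 ^ 2 * lam * x' := by gcongr
    linarith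
  · positivity
  · positivity

/-- if the stationary (KKT) conditions
`Σ_k f'_{l,k}(c*_{1,l}) = μ·ln 2` hold for every `l`, with channel eigenvalues
`λ̃_{1,l}` in descending order, then the stationary power allocation `c*_{1,l}` is in
descending order: `c*_{1,l+1} ≤ c*_{1,l}`. -/
theorem stmt_10 (N1 N2 : ℕ) (σ1 σ2 : ℝ) (hσ1 : 0 < σ1) (hσ2 : 0 < σ2)
    (lt1 : Fin N1 → ℝ) (hlt1pos : ∀ l, 0 < lt1 l) (hlt1 : Antitone lt1)
    (lt2 : Fin N2 → ℝ) (hlt2pos : ∀ k, 0 < lt2 k)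
    (c2 : Fin N2 → ℝ) (hc2 : ∀ k, 0 < c2 k)
    (c1 : Fin N1 → ℝ) (hc1 : ∀ l, 0 < c1 l)
    (μ : ℝ) (hμ : 0 < μ)
    (hstat : ∀ l : Fin N1,
      (∑ k : Fin N2,
        σ2 ^ 2 * (lt1 l) ^ 2 * (lt2 k) ^ 2 * c2 k /
          ((σ2 ^ 2 + lt1 l * lt2 k * c1 l) *
            (σ1 ^ 2 * σ2 ^ 2 + σ1 ^ 2 * lt1 l * lt2 k * c1 l +
              σ2 ^ 2 * lt1 l * lt2 k * c2 k))) = μ * Real.log 2) :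
    ∀ (l : ℕ) (hl : l + 1 < N1), c1 ⟨l + 1, hl⟩ ≤ c1 ⟨l, Nat.lt_of_succ_lt hl⟩ := by
  intro l hl
  by_contra hcon
  push_neg at hcon
  set l0 : Fin N1 := ⟨l, Nat.lt_of_succ_lt hl⟩
  set l1 : Fin N1 := ⟨l + 1, hl⟩
  have haA : lt1 l1 ≤ lt1 l0 := hlt1 (by simp [l0, l1, Fin.mk_le_mk])
  have hN2 : 0 < N2 := by
    by_contra h
    have hz : N2 = 0 := by omega
    subst hz
    have h0 := hstat l0
    simp only [Finset.univ_eq_empty, Finset.sum_empty] at h0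
    have hlog : 0 < Real.log 2 := Real.log_pos (by norm_num)
    nlinarith
  haveI : Nonempty (Fin N2) := ⟨⟨0, hN2⟩⟩
  have hsum : (∑ k : Fin N2,
        σ2 ^ 2 * (lt1 l1) ^ 2 * (lt2 k) ^ 2 * c2 k /
          ((σ2 ^ 2 + lt1 l1 * lt2 k * c1 l1) *
            (σ1 ^ 2 * σ2 ^ 2 + σ1 ^ 2 * lt1 l1 * lt2 k * c1 l1 +
              σ2 ^ 2 * lt1 l1 * lt2 k * c2 k))) <
      (∑ k : Fin N2,
        σ2 ^ 2 * (lt1 l0) ^ 2 * (lt2 k) ^ 2 * c2 k /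
          ((σ2 ^ 2 + lt1 l0 * lt2 k * c1 l0) *
            (σ1 ^ 2 * σ2 ^ 2 + σ1 ^ 2 * lt1 l0 * lt2 k * c1 l0 +
              σ2 ^ 2 * lt1 l0 * lt2 k * c2 k))) := by
    apply Finset.sum_lt_sum_of_nonempty Finset.univ_nonempty
    intro k _
    exact key_term σ1 σ2 (lt1 l1) (lt1 l0) (lt2 k) (c2 k) (c1 l0) (c1 l1)
      hσ1 hσ2 (hlt1pos l1) haA (hlt2pos k) (hc2 k) (hc1 l0) hcon
  rw [hstat l0, hstat l1] at hsum
  exact lt_irrefl _ hsum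
end

section
/- (High-power part of Theorem 4: uniform power allocation is optimal.) Let σ_1, σ_2 > 0, integers N_1, N_2 ≥ 1, S > 0, and positive reals c_{2,1},…,c_{2,N_2}. Then for all positive reals c_{1,1},…,c_{1,N_1} with Σ_{l=1}^{N_1} c_{1,l} = S, one has Σ_{k=1}^{N_2} Σ_{l=1}^{N_1} log( c_{1,l}·c_{2,k} / (σ_1² c_{1,l} + σ_2² c_{2,k}) ) ≤ Σ_{k=1}^{N_2} Σ_{l=1}^{N_1} log( (S/N_1)·c_{2,k} / (σ_1²·(S/N_1) + σ_2² c_{2,k}) ); i.e., the function φ_1 is maximized over the simplex by the uniform allocation c_{1,l} = S/N_1. -/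
open Set

lemma concave_aux (a b : ℝ) (ha : 0 < a) (hb : 0 < b) :
    ConcaveOn ℝ (Set.Ioi (0:ℝ)) (fun x => Real.log x - Real.log (a * x + b)) := by
  have hint : interior (Set.Ioi (0:ℝ)) = Set.Ioi 0 := interior_Ioi
  have hpos : ∀ x ∈ Set.Ioi (0:ℝ), 0 < a * x + b := fun x hx =>
    add_pos (mul_pos ha hx) hb
  apply concaveOn_of_hasDerivWithinAt2_nonpos (f' := fun x => x⁻¹ - a / (a * x + b))
    (f'' := fun x => -(x^2)⁻¹ + a ^ 2 / (a * x + b) ^ 2) (convex_Ioi 0)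
  · apply ContinuousOn.sub
    · exact Real.continuousOn_log.mono (by intro x hx; exact ne_of_gt hx)
    · apply ContinuousOn.comp Real.continuousOn_log (by fun_prop)
      intro x hx; exact ne_of_gt (hpos x hx)
  · intro x hx
    rw [hint] at hx ⊢
    have hx0 : (0:ℝ) < x := hx
    have h1 : HasDerivAt Real.log x⁻¹ x := Real.hasDerivAt_log (ne_of_gt hx0)
    have h2 : HasDerivAt (fun x => a * x + b) a x := by
      simpa using ((hasDerivAt_id x).const_mul a).add_const b
    have h3 : HasDerivAt (fun x => Real.log (a * x + b)) (a / (a * x + b)) x := by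
      have := (Real.hasDerivAt_log (ne_of_gt (hpos x hx))).comp x h2
      simpa [div_eq_inv_mul, Function.comp_def] using this
    exact ((h1.sub h3).hasDerivWithinAt)
  · intro x hx
    rw [hint] at hx ⊢
    have hx0 : (0:ℝ) < x := hx
    have hax : (0:ℝ) < a * x + b := hpos x hx
    have h1 : HasDerivAt (fun x : ℝ => x⁻¹) (-(x^2)⁻¹) x := by
      simpa using hasDerivAt_inv (ne_of_gt hx0)
    have h2 : HasDerivAt (fun x => a * x + b) a x := by
      simpa using ((hasDerivAt_id x).const_mul a).add_const b
    have h3 : HasDerivAt (fun x : ℝ => a / (a * x + b))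
        (-(a * a) / (a * x + b) ^ 2) x := by
      have := (h2.inv (ne_of_gt hax)).const_mul a
      rw [show -(a * a) / (a * x + b) ^ 2 = a * (-a / (a * x + b) ^ 2) by ring]
      exact this
    have : HasDerivAt (fun x : ℝ => x⁻¹ - a / (a * x + b))
        (-(x^2)⁻¹ - (-(a * a) / (a * x + b) ^ 2)) x := h1.sub h3
    rw [show -(x^2)⁻¹ + a ^ 2 / (a * x + b) ^ 2 = -(x^2)⁻¹ - (-(a * a) / (a * x + b) ^ 2) by ring]
    exact this.hasDerivWithinAt
  · intro x hx
    rw [hint] at hx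
    have hx0 : (0:ℝ) < x := hx
    have hax : (0:ℝ) < a * x + b := hpos x hx
    have key : a ^ 2 / (a * x + b) ^ 2 ≤ (x ^ 2)⁻¹ := by
      rw [inv_eq_one_div, div_le_div_iff₀ (by positivity) (by positivity)]
      nlinarith [mul_pos (mul_pos ha hx0) hb, sq_nonneg b]
    linarith

/-- high-power part of Theorem 4: the function
`φ_1(c_1) = Σ_k Σ_l log(c_{1,l} c_{2,k} / (σ_1² c_{1,l} + σ_2² c_{2,k}))`
is maximized over the simplex `{c_1 > 0 : Σ_l c_{1,l} = S}` by the uniform allocation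
`c_{1,l} = S/N_1`. -/
theorem stmt_11 (N1 N2 : ℕ) (hN1 : 1 ≤ N1) (hN2 : 1 ≤ N2)
    (σ1 σ2 : ℝ) (hσ1 : 0 < σ1) (hσ2 : 0 < σ2)
    (S : ℝ) (hS : 0 < S)
    (c2 : Fin N2 → ℝ) (hc2 : ∀ k, 0 < c2 k)
    (c1 : Fin N1 → ℝ) (hc1 : ∀ l, 0 < c1 l) (hsum : ∑ l : Fin N1, c1 l = S) :
    (∑ k : Fin N2, ∑ l : Fin N1,
        Real.log (c1 l * c2 k / (σ1 ^ 2 * c1 l + σ2 ^ 2 * c2 k))) ≤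
      ∑ k : Fin N2, ∑ l : Fin N1,
        Real.log ((S / N1) * c2 k / (σ1 ^ 2 * (S / N1) + σ2 ^ 2 * c2 k)) := by
  have hN1' : (0:ℝ) < N1 := by exact_mod_cast hN1
  have hm : (0:ℝ) < S / N1 := div_pos hS hN1'
  apply Finset.sum_le_sum
  intro k _
  set a : ℝ := σ1 ^ 2 with ha_def
  set b : ℝ := σ2 ^ 2 * c2 k with hb_def
  have ha : 0 < a := by rw [ha_def]; positivity
  have hb : 0 < b := by rw [hb_def]; exact mul_pos (pow_pos hσ2 2) (hc2 k)
  have hconc := concave_aux a b ha hb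
  -- Jensen with uniform weights
  have hjensen := hconc.le_map_sum (t := Finset.univ) (w := fun _ : Fin N1 => (N1:ℝ)⁻¹)
    (p := c1) (fun i _ => by positivity)
    (by
      simp only [Finset.sum_const, Finset.card_univ, Fintype.card_fin, nsmul_eq_mul]
      field_simp) (fun i _ => hc1 i)
  have hmean : ∑ i : Fin N1, (N1:ℝ)⁻¹ • c1 i = S / N1 := by
    rw [← Finset.smul_sum, hsum, smul_eq_mul, inv_mul_eq_div]
  rw [hmean] at hjensen
  -- rewrite each log term
  have hterm : ∀ x : ℝ, 0 < x →
      Real.log (x * c2 k / (σ1 ^ 2 * x + σ2 ^ 2 * c2 k)) =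
        (Real.log x - Real.log (a * x + b)) + Real.log (c2 k) := by
    intro x hx
    have h1 : (0:ℝ) < a * x + b := add_pos (mul_pos ha hx) hb
    rw [Real.log_div (ne_of_gt (mul_pos hx (hc2 k))) (ne_of_gt h1), Real.log_mul (ne_of_gt hx)
      (ne_of_gt (hc2 k))]
    rw [ha_def, hb_def]
    ring
  calc ∑ l : Fin N1, Real.log (c1 l * c2 k / (σ1 ^ 2 * c1 l + σ2 ^ 2 * c2 k))
      = ∑ l : Fin N1, ((Real.log (c1 l) - Real.log (a * c1 l + b)) + Real.log (c2 k)) := by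
        exact Finset.sum_congr rfl fun l _ => hterm _ (hc1 l)
    _ ≤ ∑ l : Fin N1, ((Real.log (S / N1) - Real.log (a * (S / N1) + b)) + Real.log (c2 k)) := by
        have hkey : ∑ l : Fin N1, (Real.log (c1 l) - Real.log (a * c1 l + b)) ≤
            (N1:ℝ) * (Real.log (S / N1) - Real.log (a * (S / N1) + b)) := by
          have h2 : (N1:ℝ)⁻¹ * ∑ l : Fin N1, (Real.log (c1 l) - Real.log (a * c1 l + b)) ≤
              Real.log (S / N1) - Real.log (a * (S / N1) + b) := by
            rw [← Finset.smul_sum] at hjensen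
            simpa [smul_eq_mul] using hjensen
          calc ∑ l : Fin N1, (Real.log (c1 l) - Real.log (a * c1 l + b))
              = (N1:ℝ) * ((N1:ℝ)⁻¹ *
                  ∑ l : Fin N1, (Real.log (c1 l) - Real.log (a * c1 l + b))) := by
                field_simp
            _ ≤ (N1:ℝ) * (Real.log (S / N1) - Real.log (a * (S / N1) + b)) :=
                mul_le_mul_of_nonneg_left h2 (le_of_lt hN1')
        simp only [Finset.sum_add_distrib, Finset.sum_const, Finset.card_univ,
          Fintype.card_fin, nsmul_eq_mul]
        linarith
    _ = ∑ l : Fin N1, Real.log ((S / N1) * c2 k / (σ1 ^ 2 * (S / N1) + σ2 ^ 2 * c2 k)) := by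
        exact Finset.sum_congr rfl fun l _ => (hterm _ hm).symm
end

section
/- (Eve cannot consistently estimate her CSI under ANECE.) Let A ∈ ℂ^{N_T×K} have rank r < N_T, with thin singular value decomposition A = Ǔ Λ̌ V̌^H where Ǔ ∈ ℂ^{N_T×r} satisfies Ǔ^H Ǔ = I_r, Λ̌ ∈ ℝ^{r×r} is diagonal with positive entries, and V̌ ∈ ℂ^{K×r} satisfies V̌^H V̌ = I_r. Let Ǔ_n ∈ ℂ^{N_T×(N_T−r)} satisfy Ǔ_n^H Ǔ_n = I and Ǔ_n^H Ǔ = 0. Define Φ = A (A^H A + I_K)^{−1} A^H. Then for any matrix S ∈ ℂ^{N×N_T}: Tr( S (I_{N_T} − Φ) S^H ) = Tr( S Ǔ (I_r + Λ̌²)^{−1} Ǔ^H S^H ) + Tr( S Ǔ_n Ǔ_n^H S^H ). In particular, Tr( S (I_{N_T} − Φ) S^H ) ≥ Tr( S Ǔ_n Ǔ_n^H S^H ), a quantity independent of Λ̌ (hence independent of the transmit power), so if S Ǔ_n ≠ 0 the error does not vanish as the singular values of A grow. -/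
open Matrix ComplexOrder

lemma trace_self_mul_conjTranspose_nonneg {m n : Type*} [Fintype m] [Fintype n]
    (B : Matrix m n ℂ) : 0 ≤ (B * Bᴴ).trace := by
  rw [Matrix.trace]
  refine Finset.sum_nonneg fun i _ => ?_
  simp only [Matrix.diag_apply, Matrix.mul_apply, Matrix.conjTranspose_apply]
  refine Finset.sum_nonneg fun j _ => ?_
  rw [show star (B i j) = (starRingEnd ℂ) (B i j) from rfl, Complex.mul_conj]
  exact_mod_cast Complex.normSq_nonneg _

/-- Eve cannot consistently estimate her CSI under ANECE: with the thin
SVD `A = Ǔ Λ̌ V̌ᴴ` of a rank-`r` matrix (`r < N_T`), `Ǔ_n` an orthonormal basis of the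
orthogonal complement of the column space, and `Φ = A(AᴴA + I)⁻¹Aᴴ`, for any
`S ∈ ℂ^{N×N_T}` one has
`Tr(S(I−Φ)Sᴴ) = Tr(SǓ(I+Λ̌²)⁻¹ǓᴴSᴴ) + Tr(SǓ_nǓ_nᴴSᴴ)`, and in particular
`Tr(SǓ_nǓ_nᴴSᴴ) ≤ Tr(S(I−Φ)Sᴴ)` (in the partial order of `ℂ`). -/
theorem stmt_14 (NT K N r : ℕ) (hr : r < NT)
    (A : Matrix (Fin NT) (Fin K) ℂ)
    (U : Matrix (Fin NT) (Fin r) ℂ) (hU : Uᴴ * U = 1)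
    (lam : Fin r → ℝ) (hlam : ∀ i, 0 < lam i)
    (V : Matrix (Fin K) (Fin r) ℂ) (hV : Vᴴ * V = 1)
    (hA : A = U * Matrix.diagonal (fun i => (lam i : ℂ)) * Vᴴ)
    (Un : Matrix (Fin NT) (Fin (NT - r)) ℂ)
    (hUn : Unᴴ * Un = 1) (hUnU : Unᴴ * U = 0)
    (Φ : Matrix (Fin NT) (Fin NT) ℂ)
    (hΦ : Φ = A * (Aᴴ * A + 1)⁻¹ * Aᴴ)
    (S : Matrix (Fin N) (Fin NT) ℂ) :
    (S * ((1 : Matrix (Fin NT) (Fin NT) ℂ) - Φ) * Sᴴ).trace =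
        (S * U *
            ((1 : Matrix (Fin r) (Fin r) ℂ) +
              Matrix.diagonal (fun i => ((lam i) ^ 2 : ℂ)))⁻¹ * Uᴴ * Sᴴ).trace +
          (S * Un * Unᴴ * Sᴴ).trace ∧
      (S * Un * Unᴴ * Sᴴ).trace ≤
        (S * ((1 : Matrix (Fin NT) (Fin NT) ℂ) - Φ) * Sᴴ).trace := by
  set Dc : Matrix (Fin r) (Fin r) ℂ := Matrix.diagonal (fun i => (lam i : ℂ)) with hDc
  set D2 : Matrix (Fin r) (Fin r) ℂ := Matrix.diagonal (fun i => ((lam i : ℂ) ^ 2)) with hD2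
  have hne : ∀ i, (1 + (lam i : ℂ) ^ 2) ≠ 0 := by
    intro i
    have : ((1 + lam i ^ 2 : ℝ) : ℂ) ≠ 0 := by
      exact_mod_cast (by positivity : (1 + lam i ^ 2 : ℝ) ≠ 0)
    simpa using this
  have hDcH : Dcᴴ = Dc := by
    rw [hDc, Matrix.diagonal_conjTranspose]
    refine congrArg Matrix.diagonal (funext fun i => ?_)
    simp
  have hDcDc : Dc * Dc = D2 := by
    rw [hDc, hD2, Matrix.diagonal_mul_diagonal]
    exact congrArg Matrix.diagonal (funext fun i => (sq ((lam i : ℂ))).symm)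
  have hAH : Aᴴ = V * Dc * Uᴴ := by
    rw [hA]
    simp only [Matrix.conjTranspose_mul, Matrix.conjTranspose_conjTranspose, hDcH,
      Matrix.mul_assoc]
  have hAA : Aᴴ * A = V * D2 * Vᴴ := by
    calc Aᴴ * A = V * (Dc * (Uᴴ * (U * (Dc * Vᴴ)))) := by
          rw [hAH, hA]; simp only [Matrix.mul_assoc]
      _ = V * (Dc * ((Uᴴ * U) * (Dc * Vᴴ))) := by rw [Matrix.mul_assoc]
      _ = V * (Dc * (Dc * Vᴴ)) := by rw [hU, Matrix.one_mul]
      _ = V * (Dc * Dc) * Vᴴ := by simp only [Matrix.mul_assoc]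
      _ = V * D2 * Vᴴ := by rw [hDcDc]
  set e : Fin r → ℂ := fun i => (lam i : ℂ) ^ 2 / (1 + (lam i : ℂ) ^ 2) with he
  set g : Fin r → ℂ := fun i => (1 + (lam i : ℂ) ^ 2)⁻¹ with hg
  have h0 : D2 - D2 * Matrix.diagonal e - Matrix.diagonal e = 0 := by
    rw [hD2, Matrix.diagonal_mul_diagonal, Matrix.diagonal_sub, Matrix.diagonal_sub,
      ← Matrix.diagonal_zero]
    refine congrArg Matrix.diagonal (funext fun i => ?_)
    simp only [he]
    field_simp [hne i]
    ring
  have hright : (Aᴴ * A + 1) * (1 - V * Matrix.diagonal e * Vᴴ) = 1 := by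
    rw [hAA, add_mul, one_mul, mul_sub, mul_one]
    have hm : V * D2 * Vᴴ * (V * Matrix.diagonal e * Vᴴ)
        = V * (D2 * Matrix.diagonal e) * Vᴴ := by
      calc V * D2 * Vᴴ * (V * Matrix.diagonal e * Vᴴ)
          = V * (D2 * ((Vᴴ * V) * (Matrix.diagonal e * Vᴴ))) := by
            simp only [Matrix.mul_assoc]
        _ = V * (D2 * Matrix.diagonal e) * Vᴴ := by
            rw [hV, Matrix.one_mul]; simp only [Matrix.mul_assoc]
    rw [hm]
    have hz : V * D2 * Vᴴ - V * (D2 * Matrix.diagonal e) * Vᴴ - V * Matrix.diagonal e * Vᴴ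
        = 0 := by
      have : V * (D2 - D2 * Matrix.diagonal e - Matrix.diagonal e) * Vᴴ = 0 := by
        rw [h0, Matrix.mul_zero, Matrix.zero_mul]
      simpa only [Matrix.mul_sub, Matrix.sub_mul] using this
    have h1 : V * D2 * Vᴴ - V * (D2 * Matrix.diagonal e) * Vᴴ = V * Matrix.diagonal e * Vᴴ := by
      rwa [sub_eq_zero] at hz
    rw [h1]; abel
  have hinv : (Aᴴ * A + 1)⁻¹ = 1 - V * Matrix.diagonal e * Vᴴ :=
    Matrix.inv_eq_right_inv hright
  have hVMV : Vᴴ * (1 - V * Matrix.diagonal e * Vᴴ) * V = 1 - Matrix.diagonal e := by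
    calc Vᴴ * (1 - V * Matrix.diagonal e * Vᴴ) * V
        = Vᴴ * V - Vᴴ * (V * Matrix.diagonal e * Vᴴ) * V := by
          rw [Matrix.mul_sub, Matrix.mul_one, Matrix.sub_mul]
      _ = 1 - Matrix.diagonal e := by
          rw [hV]
          congr 1
          calc Vᴴ * (V * Matrix.diagonal e * Vᴴ) * V
              = (Vᴴ * V) * (Matrix.diagonal e * (Vᴴ * V)) := by simp only [Matrix.mul_assoc]
            _ = Matrix.diagonal e := by rw [hV, Matrix.one_mul, Matrix.mul_one]
  have hDe : Dc * (1 - Matrix.diagonal e) * Dc = Matrix.diagonal e := by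
    rw [Matrix.mul_sub, Matrix.mul_one, Matrix.sub_mul, hDc]
    simp only [Matrix.diagonal_mul_diagonal]
    rw [Matrix.diagonal_sub]
    refine congrArg Matrix.diagonal (funext fun i => ?_)
    simp only [he]
    field_simp [hne i]
    ring
  have hΦ' : Φ = U * Matrix.diagonal e * Uᴴ := by
    rw [hΦ, hinv, hAH, hA]
    calc U * Dc * Vᴴ * (1 - V * Matrix.diagonal e * Vᴴ) * (V * Dc * Uᴴ)
        = U * (Dc * (Vᴴ * (1 - V * Matrix.diagonal e * Vᴴ) * V) * Dc) * Uᴴ := by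
          simp only [Matrix.mul_assoc]
      _ = U * (Dc * (1 - Matrix.diagonal e) * Dc) * Uᴴ := by rw [hVMV]
      _ = U * Matrix.diagonal e * Uᴴ := by rw [hDe]
  have hone : (1 : Matrix (Fin r) (Fin r) ℂ) + D2 = Matrix.diagonal (fun i => 1 + (lam i : ℂ)^2) := by
    rw [hD2, ← Matrix.diagonal_one, Matrix.diagonal_add]
  have hGinv : ((1 : Matrix (Fin r) (Fin r) ℂ) +
      Matrix.diagonal (fun i => ((lam i) ^ 2 : ℂ)))⁻¹ = Matrix.diagonal g := by
    apply Matrix.inv_eq_right_inv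
    rw [show Matrix.diagonal (fun i => ((lam i) ^ 2 : ℂ)) = D2 from hD2.symm, hone,
      Matrix.diagonal_mul_diagonal, ← Matrix.diagonal_one]
    refine congrArg Matrix.diagonal (funext fun i => ?_)
    exact mul_inv_cancel₀ (hne i)
  have hcomp : U * Uᴴ + Un * Unᴴ = 1 := by
    have e1 : Fin NT ≃ Fin r ⊕ Fin (NT - r) :=
      (finCongr (by omega : NT = r + (NT - r))).trans finSumFinEquiv.symm
    have h1 : Matrix.fromRows Uᴴ Unᴴ * Matrix.fromCols U Un = 1 := by
      rw [Matrix.fromRows_mul_fromCols]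
      rw [hU, hUn, hUnU]
      rw [show Uᴴ * Un = (Unᴴ * U)ᴴ by simp [Matrix.conjTranspose_mul], hUnU]
      simp [Matrix.fromBlocks_one]
    have h2 : Matrix.fromCols U Un * Matrix.fromRows Uᴴ Unᴴ = 1 :=
      (Matrix.fromCols_mul_fromRows_eq_one_comm e1 U Un Uᴴ Unᴴ).mpr h1
    rwa [Matrix.fromCols_mul_fromRows] at h2
  have hgE : (1 : Matrix (Fin r) (Fin r) ℂ) - Matrix.diagonal e = Matrix.diagonal g := by
    rw [← Matrix.diagonal_one, Matrix.diagonal_sub]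
    refine congrArg Matrix.diagonal (funext fun i => ?_)
    simp only [he, hg]
    field_simp [hne i]
    ring
  have hsplit : U * Matrix.diagonal g * Uᴴ = U * Uᴴ - U * Matrix.diagonal e * Uᴴ := by
    rw [← hgE, Matrix.mul_sub, Matrix.mul_one, Matrix.sub_mul]
  have hsub : (1 : Matrix (Fin NT) (Fin NT) ℂ) - Φ
      = U * Matrix.diagonal g * Uᴴ + Un * Unᴴ := by
    rw [hΦ', ← hcomp, hsplit]
    abel
  have heq : (S * ((1 : Matrix (Fin NT) (Fin NT) ℂ) - Φ) * Sᴴ).trace =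
      (S * U * Matrix.diagonal g * Uᴴ * Sᴴ).trace + (S * Un * Unᴴ * Sᴴ).trace := by
    rw [hsub, Matrix.mul_add, Matrix.add_mul, Matrix.trace_add]
    congr 2 <;> simp only [Matrix.mul_assoc]
  refine ⟨by rw [heq, hGinv], ?_⟩
  set C : Matrix (Fin r) (Fin r) ℂ :=
    Matrix.diagonal (fun i => ((Real.sqrt (1 + lam i ^ 2))⁻¹ : ℂ)) with hC
  have hCC : C * Cᴴ = Matrix.diagonal g := by
    rw [hC, Matrix.diagonal_conjTranspose, Matrix.diagonal_mul_diagonal]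
    refine congrArg Matrix.diagonal (funext fun i => ?_)
    have hx : (0:ℝ) ≤ 1 + lam i ^ 2 := by positivity
    simp only [Pi.star_apply, Complex.star_def, map_inv₀, Complex.conj_ofReal, hg]
    rw [← mul_inv, ← Complex.ofReal_mul, Real.mul_self_sqrt hx]
    push_cast
    ring
  have hfac : S * U * Matrix.diagonal g * Uᴴ * Sᴴ = (S * U * C) * (S * U * C)ᴴ := by
    have h2 : (S * U * C)ᴴ = Cᴴ * (Uᴴ * Sᴴ) := by
      simp only [Matrix.conjTranspose_mul, Matrix.mul_assoc]
    rw [h2, ← hCC]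
    simp only [Matrix.mul_assoc]
  have hpos : 0 ≤ (S * U * Matrix.diagonal g * Uᴴ * Sᴴ).trace := by
    rw [hfac]
    exact trace_self_mul_conjTranspose_nonneg _
  rw [heq]
  exact le_add_of_nonneg_left hpos
end
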